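/- Let E be a real Banach space of Rademacher type p ∈ [1,2], q ∈ [p,∞), k, M ∈ ℕ, and x_1,…,x_M, y_1,…,y_M ∈ E. Then for a Rademacher family (r_j)_{j=1}^M, ‖Σ_{j=1}^M r_j (⊗^k x_j − ⊗^k y_j)‖_{L_q(Ω̃; ⊗^{k,s}_{ε_s} E)} ≤ 16 k √π K_{q,p} τ_p(E) K_{q,2} · Σ_{i=1}^k binom(k,i) (Σ_{j=1}^M ‖x_j − y_j‖_E^{ip} ‖y_j‖_E^{(k−i)p})^{1/p}. -/

import Mathlib

open MeasureTheory ProbabilityTheory BigOperators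
open scoped TensorProduct

variable {E : Type u} [NormedAddCommGroup E] [NormedSpace ℝ E]

noncomputable def tpair {k : ℕ} (f : Fin k → (E →L[ℝ] ℝ)) :
    (⨂[ℝ] _ : Fin k, E) →ₗ[ℝ] ℝ :=
  PiTensorProduct.lift
    ((MultilinearMap.mkPiAlgebra ℝ (Fin k) ℝ).compLinearMap fun i => (f i).toLinearMap)

noncomputable def symInjNorm {k : ℕ} (U : ⨂[ℝ] _ : Fin k, E) : ℝ :=
  sSup {r | ∃ f : E →L[ℝ] ℝ, ‖f‖ ≤ 1 ∧ r = |tpair (fun _ => f) U|}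

noncomputable def radLq (q : ℝ) {F : Type*} [SeminormedAddCommGroup F] {n : ℕ}
    (x : Fin n → F) : ℝ :=
  ((∑ ε : Fin n → Bool, ‖∑ j, (if ε j then x j else -x j)‖ ^ q) / 2 ^ n) ^ (1/q)

set_option maxHeartbeats 1000000

namespace RadAux


/-- sign of a boolean -/
def sg (b : Bool) : ℝ := if b then 1 else -1

@[simp] lemma sg_true : sg true = 1 := rfl
@[simp] lemma sg_false : sg false = -1 := rfl

lemma sg_not (b : Bool) : sg (!b) = - sg b := by cases b <;> simp [sg]
lemma abs_sg (b : Bool) : |sg b| = 1 := by cases b <;> simp [sg]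

lemma oneside (a s u f c T1 T2 T3 T4 : ℝ)
    (h1 : f ≤ |s| + |u|)
    (hT1 : a + (2*s + 2*u) - c ≤ T1) (hT2 : a + (2*s - 2*u) - c ≤ T2)
    (hT3 : a + (-(2*s) + 2*u) - c ≤ T3) (hT4 : a + (-(2*s) - 2*u) - c ≤ T4)
    (hT1' : 0 ≤ T1) (hT2' : 0 ≤ T2) (hT3' : 0 ≤ T3) (hT4' : 0 ≤ T4) :
    2*(a + f - c) ≤ T1 + T2 + T3 + T4 := by
  rcases abs_cases s with ⟨hs, hs'⟩ | ⟨hs, hs'⟩ <;>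
    rcases abs_cases u with ⟨hu, hu'⟩ | ⟨hu, hu'⟩ <;>
    rcases le_total (a - c) 0 with hac | hac <;> linarith

lemma twoside (a a' s u s' u' f g c T1 T2 T3 T4 : ℝ)
    (h3 : f - g ≤ |s - s'| + |u - u'|)
    (hT1 : a + (2*s + 2*u) - c ≤ T1) (hT1' : a' + (2*s' + 2*u') - c ≤ T1)
    (hT2 : a + (2*s - 2*u) - c ≤ T2) (hT2' : a' + (2*s' - 2*u') - c ≤ T2)
    (hT3 : a + (-(2*s) + 2*u) - c ≤ T3) (hT3' : a' + (-(2*s') + 2*u') - c ≤ T3)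
    (hT4 : a + (-(2*s) - 2*u) - c ≤ T4) (hT4' : a' + (-(2*s') - 2*u') - c ≤ T4)
    (hT10 : 0 ≤ T1) (hT20 : 0 ≤ T2) (hT30 : 0 ≤ T3) (hT40 : 0 ≤ T4) :
    2*((a + f - c) + (a' - g - c)) ≤ T1 + T2 + T3 + T4 := by
  rcases abs_cases (s - s') with ⟨h5, h5'⟩ | ⟨h5, h5'⟩ <;>
    rcases abs_cases (u - u') with ⟨h6, h6'⟩ | ⟨h6, h6'⟩ <;>
    rcases le_total ((a - c) + (a' - c)) 0 with hB | hB <;> linarith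

lemma star_core (a a' s u s' u' f g c T1 T2 T3 T4 : ℝ)
    (h1 : f ≤ |s| + |u|) (h2 : -g ≤ |s'| + |u'|) (h3 : f - g ≤ |s - s'| + |u - u'|)
    (hT1 : a + (2*s + 2*u) - c ≤ T1) (hT1' : a' + (2*s' + 2*u') - c ≤ T1)
    (hT2 : a + (2*s - 2*u) - c ≤ T2) (hT2' : a' + (2*s' - 2*u') - c ≤ T2)
    (hT3 : a + (-(2*s) + 2*u) - c ≤ T3) (hT3' : a' + (-(2*s') + 2*u') - c ≤ T3)
    (hT4 : a + (-(2*s) - 2*u) - c ≤ T4) (hT4' : a' + (-(2*s') - 2*u') - c ≤ T4)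
    (hT10 : 0 ≤ T1) (hT20 : 0 ≤ T2) (hT30 : 0 ≤ T3) (hT40 : 0 ≤ T4) :
    max (a + f - c) 0 + max (a' - g - c) 0 ≤ (T1 + T2 + T3 + T4)/2 := by
  rcases le_total (a + f - c) 0 with hx | hx <;> rcases le_total (a' - g - c) 0 with hy | hy
  · rw [max_eq_right hx, max_eq_right hy]; linarith
  · rw [max_eq_right hx, max_eq_left hy]
    have := oneside a' s' u' (-g) c T1 T2 T3 T4 h2 hT1' hT2' hT3' hT4' hT10 hT20 hT30 hT40
    linarith
  · rw [max_eq_left hx, max_eq_right hy]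
    have := oneside a s u f c T1 T2 T3 T4 h1 hT1 hT2 hT3 hT4 hT10 hT20 hT30 hT40
    linarith
  · rw [max_eq_left hx, max_eq_left hy]
    have := twoside a a' s u s' u' f g c T1 T2 T3 T4 h3 hT1 hT1' hT2 hT2' hT3 hT3' hT4 hT4'
      hT10 hT20 hT30 hT40
    linarith

lemma bddAbove_range_of_bound {T : Type*} (g : T → ℝ) (C : ℝ) (h : ∀ t, g t ≤ C) :
    BddAbove (Set.range g) := ⟨C, by rintro _ ⟨t, rfl⟩; exact h t⟩

lemma hinge_mono (c : ℝ) : Monotone (fun x : ℝ => max (x - c) 0) := by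
  intro x y hxy; exact max_le_max (by linarith) le_rfl

lemma hinge_cont (c x : ℝ) : ContinuousAt (fun x : ℝ => max (x - c) 0) x := by
  fun_prop

lemma hinge_ciSup {T : Type*} [Nonempty T] (g : T → ℝ) (hb : BddAbove (Set.range g)) (c : ℝ) :
    max ((⨆ t, g t) - c) 0 = ⨆ t, max (g t - c) 0 :=
  Monotone.map_ciSup_of_continuousAt (hinge_cont c _) (hinge_mono c) hb

/-- one-step comparison -/
lemma onestep_max {T : Type*} [Nonempty T] (A s u φ : T → ℝ) (CA Cs Cu : ℝ)
    (hA : ∀ t, |A t| ≤ CA) (hs : ∀ t, |s t| ≤ Cs) (hu : ∀ t, |u t| ≤ Cu)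
    (hφ0 : ∀ t, |φ t| ≤ |s t| + |u t|)
    (hφL : ∀ t t', |φ t - φ t'| ≤ |s t - s t'| + |u t - u t'|) (c : ℝ) :
    2 * ∑ b : Bool, max ((⨆ t, (A t + sg b * φ t)) - c) 0
      ≤ ∑ b : Bool, ∑ b' : Bool,
          max ((⨆ t, (A t + (sg b * (2 * s t) + sg b' * (2 * u t)))) - c) 0 := by
  have hφC : ∀ t, |φ t| ≤ Cs + Cu := fun t =>
    (hφ0 t).trans (add_le_add (hs t) (hu t))
  have habs : ∀ (e z C : ℝ), |e| ≤ 1 → |z| ≤ C → |e * z| ≤ C := by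
    intro e z C he hz
    rw [abs_mul]
    calc |e| * |z| ≤ 1 * C := mul_le_mul he hz (abs_nonneg _) zero_le_one
      _ = C := one_mul _
  have hb1 : ∀ (e : ℝ), |e| ≤ 1 → BddAbove (Set.range fun t => A t + e * φ t) := by
    intro e he
    refine bddAbove_range_of_bound _ (CA + (Cs + Cu)) fun t => ?_
    have h1 : A t ≤ CA := (abs_le.mp (hA t)).2
    have h2 : e * φ t ≤ Cs + Cu := (abs_le.mp (habs e (φ t) _ he (hφC t))).2
    linarith
  have hb2 : ∀ (e e' : ℝ), |e| ≤ 1 → |e'| ≤ 1 →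
      BddAbove (Set.range fun t => A t + (e * (2 * s t) + e' * (2 * u t))) := by
    intro e e' he he'
    refine bddAbove_range_of_bound _ (CA + (2*Cs + 2*Cu)) fun t => ?_
    have h1 : A t ≤ CA := (abs_le.mp (hA t)).2
    have hz : |2 * s t| ≤ 2 * Cs := by
      rw [abs_mul]; simp only [abs_two]
      exact mul_le_mul_of_nonneg_left (hs t) (by norm_num)
    have hz' : |2 * u t| ≤ 2 * Cu := by
      rw [abs_mul]; simp only [abs_two]
      exact mul_le_mul_of_nonneg_left (hu t) (by norm_num)
    have h2 := (abs_le.mp (habs e (2 * s t) _ he hz)).2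
    have h3 := (abs_le.mp (habs e' (2 * u t) _ he' hz')).2
    linarith
  simp only [Fintype.sum_bool, sg_true, sg_false, one_mul, neg_one_mul, ← sub_eq_add_neg]
  set T1 := max ((⨆ t, (A t + (2 * s t + 2 * u t))) - c) 0 with hT1def
  set T2 := max ((⨆ t, (A t + (2 * s t - 2 * u t))) - c) 0 with hT2def
  set T3 := max ((⨆ t, (A t + (-(2 * s t) + 2 * u t))) - c) 0 with hT3def
  set T4 := max ((⨆ t, (A t + (-(2 * s t) - 2 * u t))) - c) 0 with hT4def
  have hT10 : (0:ℝ) ≤ T1 := le_max_right _ _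
  have hT20 : (0:ℝ) ≤ T2 := le_max_right _ _
  have hT30 : (0:ℝ) ≤ T3 := le_max_right _ _
  have hT40 : (0:ℝ) ≤ T4 := le_max_right _ _
  have key : ∀ g : T → ℝ, BddAbove (Set.range g) → ∀ t₀, g t₀ - c ≤ max ((⨆ t, g t) - c) 0 := by
    intro g hb t₀
    have h1 := le_ciSup hb t₀
    have h2 : g t₀ - c ≤ (⨆ t, g t) - c := by linarith
    exact h2.trans (le_max_left _ _)
  have e1 : |(1:ℝ)| ≤ 1 := by norm_num
  have em1 : |(-1:ℝ)| ≤ 1 := by norm_num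
  have hbp : BddAbove (Set.range fun t => A t + φ t) := by
    have := hb1 1 e1; simpa using this
  have hbm : BddAbove (Set.range fun t => A t - φ t) := by
    have := hb1 (-1) em1; simpa [neg_one_mul, ← sub_eq_add_neg] using this
  rw [hinge_ciSup _ hbp, hinge_ciSup _ hbm]
  have hb11 : BddAbove (Set.range fun t => A t + (2 * s t + 2 * u t)) := by
    have := hb2 1 1 e1 e1; simpa using this
  have hb12 : BddAbove (Set.range fun t => A t + (2 * s t - 2 * u t)) := by
    have := hb2 1 (-1) e1 em1; simpa [neg_one_mul, ← sub_eq_add_neg] using this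
  have hb21 : BddAbove (Set.range fun t => A t + (-(2 * s t) + 2 * u t)) := by
    have := hb2 (-1) 1 em1 e1; simpa [neg_one_mul] using this
  have hb22 : BddAbove (Set.range fun t => A t + (-(2 * s t) - 2 * u t)) := by
    have := hb2 (-1) (-1) em1 em1; simpa [neg_one_mul, ← sub_eq_add_neg] using this
  have goal2 : ∀ tp tm, (max (A tp + φ tp - c) 0) + (max (A tm - φ tm - c) 0)
      ≤ (T1 + T2 + T3 + T4) / 2 := by
    intro tp tm
    refine star_core (A tp) (A tm) (s tp) (u tp) (s tm) (u tm) (φ tp) (φ tm) c T1 T2 T3 T4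
      ((le_abs_self _).trans (hφ0 tp))
      ((neg_le_abs _).trans (hφ0 tm))
      ((le_abs_self _).trans (hφL tp tm))
      ?_ ?_ ?_ ?_ ?_ ?_ ?_ ?_ hT10 hT20 hT30 hT40
    · rw [hT1def]; exact key _ hb11 tp
    · rw [hT1def]; exact key _ hb11 tm
    · rw [hT2def]; exact key _ hb12 tp
    · rw [hT2def]; exact key _ hb12 tm
    · rw [hT3def]; exact key _ hb21 tp
    · rw [hT3def]; exact key _ hb21 tm
    · rw [hT4def]; exact key _ hb22 tp
    · rw [hT4def]; exact key _ hb22 tm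
  have hbb : BddAbove (Set.range fun tm => max (A tm - φ tm - c) 0) := by
    obtain ⟨b, hbd⟩ := hbm
    refine bddAbove_range_of_bound _ (max (b - c) 0) fun t => ?_
    have : A t - φ t ≤ b := hbd ⟨t, rfl⟩
    exact max_le_max (by linarith) le_rfl
  have h2 : ∀ tp, (max (A tp + φ tp - c) 0)
      ≤ (T1+T2+T3+T4)/2 - ⨆ tm, max (A tm - φ tm - c) 0 := by
    intro tp
    have h3 : (⨆ tm, max (A tm - φ tm - c) 0)
        ≤ (T1+T2+T3+T4)/2 - max (A tp + φ tp - c) 0 :=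
      ciSup_le fun tm => by have := goal2 tp tm; linarith
    linarith
  have hs1 := ciSup_le h2
  linarith

noncomputable def hsup {T : Type*} (v : T → ℝ) (c : ℝ) : ℝ := max ((⨆ t, v t) - c) 0

lemma hsup_congr {T : Type*} {v w : T → ℝ} (c : ℝ) (h : ∀ t, v t = w t) :
    hsup v c = hsup w c := by
  unfold hsup
  rw [funext h]

lemma onestep {T : Type*} [Nonempty T] (A s u φ : T → ℝ) (CA Cs Cu : ℝ)
    (hA : ∀ t, |A t| ≤ CA) (hs : ∀ t, |s t| ≤ Cs) (hu : ∀ t, |u t| ≤ Cu)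
    (hφ0 : ∀ t, |φ t| ≤ |s t| + |u t|)
    (hφL : ∀ t t', |φ t - φ t'| ≤ |s t - s t'| + |u t - u t'|) (c : ℝ) :
    2 * ∑ b : Bool, hsup (fun t => A t + sg b * φ t) c
      ≤ ∑ b : Bool, ∑ b' : Bool,
          hsup (fun t => A t + (sg b * (2 * s t) + sg b' * (2 * u t))) c :=
  onestep_max A s u φ CA Cs Cu hA hs hu hφ0 hφL c

lemma compare_main {T : Type*} [Nonempty T] (n : ℕ) (A : T → ℝ) (s u φ : Fin n → T → ℝ)
    (CA : ℝ) (hA : ∀ t, |A t| ≤ CA)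
    (Cs Cu : Fin n → ℝ) (hs : ∀ j t, |s j t| ≤ Cs j) (hu : ∀ j t, |u j t| ≤ Cu j)
    (hφ0 : ∀ j t, |φ j t| ≤ |s j t| + |u j t|)
    (hφL : ∀ j t t', |φ j t - φ j t'| ≤ |s j t - s j t'| + |u j t - u j t'|) (c : ℝ) :
    (2:ℝ)^n * ∑ ε : Fin n → Bool, hsup (fun t => A t + ∑ j, sg (ε j) * φ j t) c
      ≤ ∑ ε : Fin n → Bool, ∑ ε' : Fin n → Bool,
          hsup (fun t => A t + ∑ j, (sg (ε j) * (2 * s j t) + sg (ε' j) * (2 * u j t))) c := by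
  induction n generalizing A CA with
  | zero => simp
  | succ n IH =>
      have reindex : ∀ (G : (Fin (n+1) → Bool) → ℝ),
          ∑ ε : Fin (n+1) → Bool, G ε = ∑ b : Bool, ∑ ε : Fin n → Bool, G (Fin.cons b ε) := by
        intro G
        have e1 : ∑ y : Bool × (Fin n → Bool), G (Fin.cons y.1 y.2)
            = ∑ b : Bool, ∑ ε : Fin n → Bool, G (Fin.cons b ε) :=
          Fintype.sum_prod_type _
        rw [← e1]
        exact (Fintype.sum_equiv (Fin.consEquiv (fun _ => Bool))
          (fun y => G (Fin.cons y.1 y.2)) G (fun y => rfl)).symm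
      -- abbreviations
      set Q : (Fin (n+1) → Bool) → ℝ :=
        fun ε => hsup (fun t => A t + ∑ j, sg (ε j) * φ j t) c with hQ
      set P : (Fin (n+1) → Bool) → (Fin (n+1) → Bool) → ℝ :=
        fun ε ε' => hsup (fun t => A t + ∑ j, (sg (ε j) * (2 * s j t) + sg (ε' j) * (2 * u j t))) c
        with hP
      set R : Bool → (Fin n → Bool) → (Fin n → Bool) → ℝ :=
        fun b ε ε' => hsup (fun t => (A t + sg b * φ 0 t)
          + ∑ j : Fin n, (sg (ε j) * (2 * s j.succ t) + sg (ε' j) * (2 * u j.succ t))) c with hR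
      set S : Bool → Bool → (Fin n → Bool) → (Fin n → Bool) → ℝ :=
        fun b b' ε ε' => hsup (fun t => A t + ((sg b * (2 * s 0 t) + sg b' * (2 * u 0 t))
          + ∑ j : Fin n, (sg (ε j) * (2 * s j.succ t) + sg (ε' j) * (2 * u j.succ t)))) c with hS
      -- step h2 : IH applied with background A + sg b * φ 0
      have h2 : ∀ b : Bool, (2:ℝ)^n * ∑ ε : Fin n → Bool, Q (Fin.cons b ε)
          ≤ ∑ ε : Fin n → Bool, ∑ ε' : Fin n → Bool, R b ε ε' := by
        intro b
        have hAb : ∀ t, |A t + sg b * φ 0 t| ≤ CA + (Cs 0 + Cu 0) := by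
          intro t
          calc |A t + sg b * φ 0 t| ≤ |A t| + |sg b * φ 0 t| := abs_add_le _ _
            _ ≤ CA + (Cs 0 + Cu 0) := by
                apply add_le_add (hA t)
                rw [abs_mul, abs_sg, one_mul]
                exact (hφ0 0 t).trans (add_le_add (hs 0 t) (hu 0 t))
        have step := IH (fun t => A t + sg b * φ 0 t)
          (fun j => s j.succ) (fun j => u j.succ) (fun j => φ j.succ)
          (CA + (Cs 0 + Cu 0)) hAb
          (fun j => Cs j.succ) (fun j => Cu j.succ)
          (fun j t => hs j.succ t) (fun j t => hu j.succ t)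
          (fun j t => hφ0 j.succ t) (fun j t t' => hφL j.succ t t')
        have eQ : ∀ ε : Fin n → Bool, Q (Fin.cons b ε)
            = hsup (fun t => (A t + sg b * φ 0 t) + ∑ j : Fin n, sg (ε j) * φ j.succ t) c := by
          intro ε
          rw [hQ]
          apply hsup_congr
          intro t
          rw [Fin.sum_univ_succ]
          simp [Fin.cons_zero, Fin.cons_succ, add_assoc]
        calc (2:ℝ)^n * ∑ ε : Fin n → Bool, Q (Fin.cons b ε)
            = (2:ℝ)^n * ∑ ε : Fin n → Bool,
                hsup (fun t => (A t + sg b * φ 0 t) + ∑ j : Fin n, sg (ε j) * φ j.succ t) c := by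
              congr 1; exact Finset.sum_congr rfl (fun ε _ => eQ ε)
          _ ≤ ∑ ε : Fin n → Bool, ∑ ε' : Fin n → Bool, R b ε ε' := step
      -- step h3 : onestep for each (ε, ε')
      have h3 : ∀ (ε ε' : Fin n → Bool), 2 * ∑ b : Bool, R b ε ε'
          ≤ ∑ b : Bool, ∑ b' : Bool, S b b' ε ε' := by
        intro ε ε'
        set B : T → ℝ := fun t => A t
          + ∑ j : Fin n, (sg (ε j) * (2 * s j.succ t) + sg (ε' j) * (2 * u j.succ t)) with hB
        have hBb : ∀ t, |B t| ≤ CA + ∑ j : Fin n, (2 * Cs j.succ + 2 * Cu j.succ) := by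
          intro t
          calc |B t| ≤ |A t|
              + |∑ j : Fin n, (sg (ε j) * (2 * s j.succ t) + sg (ε' j) * (2 * u j.succ t))| :=
                abs_add_le _ _
            _ ≤ CA + ∑ j : Fin n, (2 * Cs j.succ + 2 * Cu j.succ) := by
                apply add_le_add (hA t)
                refine (Finset.abs_sum_le_sum_abs _ _).trans ?_
                apply Finset.sum_le_sum
                intro j _
                calc |sg (ε j) * (2 * s j.succ t) + sg (ε' j) * (2 * u j.succ t)|
                    ≤ |sg (ε j) * (2 * s j.succ t)| + |sg (ε' j) * (2 * u j.succ t)| := abs_add_le _ _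
                  _ ≤ 2 * Cs j.succ + 2 * Cu j.succ := by
                      apply add_le_add
                      · rw [abs_mul, abs_sg, one_mul, abs_mul, abs_two]
                        exact mul_le_mul_of_nonneg_left (hs _ t) (by norm_num)
                      · rw [abs_mul, abs_sg, one_mul, abs_mul, abs_two]
                        exact mul_le_mul_of_nonneg_left (hu _ t) (by norm_num)
        have os := onestep B (s 0) (u 0) (φ 0)
          (CA + ∑ j : Fin n, (2 * Cs j.succ + 2 * Cu j.succ)) (Cs 0) (Cu 0)
          hBb (fun t => hs 0 t) (fun t => hu 0 t) (fun t => hφ0 0 t) (fun t t' => hφL 0 t t') c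
        have eR : ∀ b : Bool, R b ε ε' = hsup (fun t => B t + sg b * φ 0 t) c := by
          intro b; rw [hR]; apply hsup_congr; intro t; rw [hB]; ring
        have eS : ∀ b b' : Bool, S b b' ε ε'
            = hsup (fun t => B t + (sg b * (2 * s 0 t) + sg b' * (2 * u 0 t))) c := by
          intro b b'; rw [hS]; apply hsup_congr; intro t; rw [hB]; ring
        calc 2 * ∑ b : Bool, R b ε ε'
            = 2 * ∑ b : Bool, hsup (fun t => B t + sg b * φ 0 t) c := by
              congr 1; exact Finset.sum_congr rfl (fun b _ => eR b)
          _ ≤ ∑ b : Bool, ∑ b' : Bool,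
                hsup (fun t => B t + (sg b * (2 * s 0 t) + sg b' * (2 * u 0 t))) c := os
          _ = ∑ b : Bool, ∑ b' : Bool, S b b' ε ε' := by
              refine Finset.sum_congr rfl (fun b _ => ?_)
              exact Finset.sum_congr rfl (fun b' _ => (eS b b').symm)
      -- step h4 : RHS reassembly
      have h4 : ∑ ε : Fin (n+1) → Bool, ∑ ε' : Fin (n+1) → Bool, P ε ε'
          = ∑ ε : Fin n → Bool, ∑ ε' : Fin n → Bool, ∑ b : Bool, ∑ b' : Bool, S b b' ε ε' := by
        have ePS : ∀ (b b' : Bool) (ε ε' : Fin n → Bool),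
            P (Fin.cons b ε) (Fin.cons b' ε') = S b b' ε ε' := by
          intro b b' ε ε'
          rw [hP, hS]
          apply hsup_congr
          intro t
          rw [Fin.sum_univ_succ]
          simp [Fin.cons_zero, Fin.cons_succ]
        calc ∑ ε : Fin (n+1) → Bool, ∑ ε' : Fin (n+1) → Bool, P ε ε'
            = ∑ b : Bool, ∑ ε : Fin n → Bool, ∑ ε' : Fin (n+1) → Bool, P (Fin.cons b ε) ε' := by
              rw [reindex]
          _ = ∑ b : Bool, ∑ ε : Fin n → Bool, ∑ b' : Bool, ∑ ε' : Fin n → Bool,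
                P (Fin.cons b ε) (Fin.cons b' ε') := by
              refine Finset.sum_congr rfl (fun b _ => ?_)
              refine Finset.sum_congr rfl (fun ε _ => ?_)
              exact reindex _
          _ = ∑ b : Bool, ∑ ε : Fin n → Bool, ∑ b' : Bool, ∑ ε' : Fin n → Bool, S b b' ε ε' := by
              refine Finset.sum_congr rfl (fun b _ => ?_)
              refine Finset.sum_congr rfl (fun ε _ => ?_)
              refine Finset.sum_congr rfl (fun b' _ => ?_)
              exact Finset.sum_congr rfl (fun ε' _ => ePS b b' ε ε')
          _ = ∑ ε : Fin n → Bool, ∑ ε' : Fin n → Bool, ∑ b : Bool, ∑ b' : Bool, S b b' ε ε' := by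
              rw [Finset.sum_comm]
              refine Finset.sum_congr rfl (fun ε _ => ?_)
              calc ∑ b : Bool, ∑ b' : Bool, ∑ ε' : Fin n → Bool, S b b' ε ε'
                  = ∑ b : Bool, ∑ ε' : Fin n → Bool, ∑ b' : Bool, S b b' ε ε' := by
                    exact Finset.sum_congr rfl (fun b _ => Finset.sum_comm)
                _ = ∑ ε' : Fin n → Bool, ∑ b : Bool, ∑ b' : Bool, S b b' ε ε' := Finset.sum_comm
      -- final chain
      calc (2:ℝ)^(n+1) * ∑ ε : Fin (n+1) → Bool, Q ε
          = ∑ b : Bool, 2 * ((2:ℝ)^n * ∑ ε : Fin n → Bool, Q (Fin.cons b ε)) := by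
            rw [reindex Q, Finset.mul_sum]
            exact Finset.sum_congr rfl (fun b _ => by ring)
        _ ≤ ∑ b : Bool, 2 * (∑ ε : Fin n → Bool, ∑ ε' : Fin n → Bool, R b ε ε') := by
            apply Finset.sum_le_sum
            intro b _
            exact mul_le_mul_of_nonneg_left (h2 b) (by norm_num)
        _ = ∑ ε : Fin n → Bool, ∑ ε' : Fin n → Bool, 2 * ∑ b : Bool, R b ε ε' := by
            calc ∑ b : Bool, 2 * (∑ ε : Fin n → Bool, ∑ ε' : Fin n → Bool, R b ε ε')
                = ∑ b : Bool, ∑ ε : Fin n → Bool, ∑ ε' : Fin n → Bool, 2 * R b ε ε' := by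
                  refine Finset.sum_congr rfl (fun b _ => ?_)
                  rw [Finset.mul_sum]
                  exact Finset.sum_congr rfl (fun ε _ => Finset.mul_sum _ _ _)
              _ = ∑ ε : Fin n → Bool, ∑ b : Bool, ∑ ε' : Fin n → Bool, 2 * R b ε ε' :=
                  Finset.sum_comm
              _ = ∑ ε : Fin n → Bool, ∑ ε' : Fin n → Bool, ∑ b : Bool, 2 * R b ε ε' :=
                  Finset.sum_congr rfl (fun ε _ => Finset.sum_comm)
              _ = ∑ ε : Fin n → Bool, ∑ ε' : Fin n → Bool, 2 * ∑ b : Bool, R b ε ε' := by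
                  refine Finset.sum_congr rfl (fun ε _ => ?_)
                  exact Finset.sum_congr rfl (fun ε' _ => (Finset.mul_sum _ _ _).symm)
        _ ≤ ∑ ε : Fin n → Bool, ∑ ε' : Fin n → Bool, ∑ b : Bool, ∑ b' : Bool, S b b' ε ε' := by
            apply Finset.sum_le_sum; intro ε _
            apply Finset.sum_le_sum; intro ε' _
            exact h3 ε ε'
        _ = ∑ ε : Fin (n+1) → Bool, ∑ ε' : Fin (n+1) → Bool, P ε ε' := h4.symm


open MeasureTheory intervalIntegral

lemma hinge_kernel_integrable (x p : ℝ) (hp : 1 < p) :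
    IntegrableOn (fun c => max (x - c) 0 * (p * (p-1) * c ^ (p-2))) (Set.Ioi (0:ℝ)) := by
  set m := max x 1 with hm
  have hm0 : (0:ℝ) < m := lt_of_lt_of_le one_pos (le_max_right _ _)
  have hxm : x ≤ m := le_max_left _ _
  have h1 : IntegrableOn (fun c : ℝ => c ^ (p-2)) (Set.Ioc (0:ℝ) m) := by
    have := (intervalIntegrable_rpow' (a := 0) (b := m) (r := p-2) (by linarith))
    exact (intervalIntegrable_iff_integrableOn_Ioc_of_le hm0.le).mp this
  have h2 : IntegrableOn
      (fun c => (max (x - max c 0) 0 * (p * (p-1))) * c ^ (p-2)) (Set.Ioc (0:ℝ) m) := by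
    apply Integrable.bdd_mul (c := max x 0 * (p * (p-1))) h1
    · apply Continuous.aestronglyMeasurable; fun_prop
    · refine ae_of_all _ (fun c => ?_)
      rw [Real.norm_eq_abs, abs_mul]
      have h4 : |max (x - max c 0) 0| ≤ max x 0 := by
        rw [abs_of_nonneg (le_max_right _ _)]
        have : x - max c 0 ≤ x := by
          have := le_max_right c 0; have := le_max_left c 0
          rcases le_total c 0 with h | h
          · rw [max_eq_right h]; linarith
          · rw [max_eq_left h]; linarith
        exact max_le_max this le_rfl
      have h5 : |p * (p-1)| = p * (p-1) := abs_of_nonneg (by nlinarith)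
      rw [h5]
      exact mul_le_mul_of_nonneg_right h4 (by nlinarith)
  have h3 : IntegrableOn (fun c => max (x - c) 0 * (p * (p-1) * c ^ (p-2))) (Set.Ioc (0:ℝ) m) := by
    apply h2.congr_fun _ measurableSet_Ioc
    intro c hc
    dsimp only
    have hcc : max c 0 = c := max_eq_left hc.1.le
    rw [hcc]; ring
  have h4 : IntegrableOn (fun c => max (x - c) 0 * (p * (p-1) * c ^ (p-2))) (Set.Ioi m) := by
    apply integrableOn_zero.congr_fun _ measurableSet_Ioi
    intro c hc
    have : x - c < 0 := by have := hc.out; linarith [Set.mem_Ioi.mp hc]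
    simp [max_eq_right this.le]
  have := h3.union h4
  rwa [Set.Ioc_union_Ioi_eq_Ioi hm0.le] at this

lemma hinge_rpow_identity (x p : ℝ) (hp : 1 < p) :
    ∫ c in Set.Ioi (0:ℝ), max (x - c) 0 * (p * (p-1) * c ^ (p-2)) = (max x 0) ^ p := by
  rcases le_or_gt x 0 with hx | hx
  · rw [max_eq_right hx, Real.zero_rpow (by linarith)]
    rw [setIntegral_congr_fun measurableSet_Ioi
      (g := fun _ => (0:ℝ)) (fun c hc => by
        have : x - c < 0 := by have := Set.mem_Ioi.mp hc; linarith
        simp [max_eq_right this.le])]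
    simp
  · rw [max_eq_left hx.le]
    have hsplit : Set.Ioi (0:ℝ) = Set.Ioc 0 x ∪ Set.Ioi x := (Set.Ioc_union_Ioi_eq_Ioi hx.le).symm
    rw [hsplit]
    have hint := hinge_kernel_integrable x p hp
    rw [hsplit] at hint
    have hi1 : IntegrableOn (fun c => max (x - c) 0 * (p * (p-1) * c ^ (p-2))) (Set.Ioc 0 x) :=
      hint.mono_set Set.subset_union_left
    have hi2 : IntegrableOn (fun c => max (x - c) 0 * (p * (p-1) * c ^ (p-2))) (Set.Ioi x) :=
      hint.mono_set Set.subset_union_right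
    rw [setIntegral_union (Set.Ioc_disjoint_Ioi le_rfl) measurableSet_Ioi hi1 hi2]
    have hz : ∫ c in Set.Ioi x, max (x - c) 0 * (p * (p-1) * c ^ (p-2)) = 0 := by
      rw [setIntegral_congr_fun measurableSet_Ioi (g := fun _ => (0:ℝ)) (fun c hc => by
        have : x - c < 0 := by have := Set.mem_Ioi.mp hc; linarith
        simp [max_eq_right this.le])]
      simp
    rw [hz, add_zero]
    -- main interval computation
    rw [← intervalIntegral.integral_of_le hx.le]
    have hcong : ∫ c in (0:ℝ)..x, max (x - c) 0 * (p * (p-1) * c ^ (p-2))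
        = ∫ c in (0:ℝ)..x, (p * (p-1)) * (x * c ^ (p-2)) - (p * (p-1)) * (c ^ (p-1)) := by
      apply intervalIntegral.integral_congr
      intro c hc
      rw [Set.uIcc_of_le hx.le] at hc
      obtain ⟨hc0, hcx⟩ := hc
      dsimp only
      have hmax : max (x - c) 0 = x - c := max_eq_left (by linarith)
      rw [hmax]
      rcases eq_or_lt_of_le hc0 with hc0' | hc0'
      · subst hc0'
        rw [Real.zero_rpow (by linarith : p - 1 ≠ 0)]
        ring
      · have e1 : c ^ (p-1) = c ^ (p-2) * c := by
          rw [← Real.rpow_add_one hc0'.ne' (p-2), show p-2+1 = p-1 from by ring]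
        rw [e1]; ring
    rw [hcong]
    have hInt1 : IntervalIntegrable (fun c : ℝ => (p * (p-1)) * (x * c ^ (p-2))) volume 0 x := by
      have := (intervalIntegrable_rpow' (a := 0) (b := x) (r := p-2) (by linarith))
      exact (this.const_mul x).const_mul _
    have hInt2 : IntervalIntegrable (fun c : ℝ => (p * (p-1)) * (c ^ (p-1))) volume 0 x := by
      have := (intervalIntegrable_rpow' (a := 0) (b := x) (r := p-1) (by linarith))
      exact this.const_mul _
    rw [intervalIntegral.integral_sub hInt1 hInt2]
    rw [intervalIntegral.integral_const_mul, intervalIntegral.integral_const_mul,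
      intervalIntegral.integral_const_mul]
    rw [integral_rpow (Or.inl (by linarith : (-1:ℝ) < p-2)),
      integral_rpow (Or.inl (by linarith : (-1:ℝ) < p-1))]
    rw [Real.zero_rpow (show p - 2 + 1 ≠ 0 from by intro h; linarith [h]; ),
      Real.zero_rpow (show p - 1 + 1 ≠ 0 from by intro h; linarith [h])]
    rw [show p - 2 + 1 = p - 1 from by ring, show p - 1 + 1 = p from by ring]
    rw [sub_zero, sub_zero]
    have e4 : x * x ^ (p-1) = x ^ p := by
      rw [mul_comm, ← Real.rpow_add_one hx.ne' (p-1), show p-1+1 = p from by ring]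
    have hp1 : p - 1 ≠ 0 := by linarith
    have hpp : p ≠ 0 := by linarith
    rw [show x * (x ^ (p-1) / (p-1)) = (x * x ^ (p-1)) / (p-1) from by ring, e4]
    field_simp
    ring

/-- hinge domination implies p-th moment domination -/
lemma hinge_to_rpow {ι κ : Type*} [Fintype ι] [Fintype κ] (X : ι → ℝ) (Y : κ → ℝ)
    (p : ℝ) (hp : 1 ≤ p)
    (h : ∀ c : ℝ, 0 ≤ c → ∑ i, max (X i - c) 0 ≤ ∑ j, max (Y j - c) 0) :
    ∑ i, (max (X i) 0) ^ p ≤ ∑ j, (max (Y j) 0) ^ p := by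
  rcases eq_or_lt_of_le hp with hp1 | hp1
  · subst hp1
    simp only [Real.rpow_one]
    have := h 0 le_rfl
    simpa using this
  · have key : ∀ i : ι, (max (X i) 0) ^ p
        = ∫ c in Set.Ioi (0:ℝ), max (X i - c) 0 * (p * (p-1) * c ^ (p-2)) :=
      fun i => (hinge_rpow_identity (X i) p hp1).symm
    have key' : ∀ j : κ, (max (Y j) 0) ^ p
        = ∫ c in Set.Ioi (0:ℝ), max (Y j - c) 0 * (p * (p-1) * c ^ (p-2)) :=
      fun j => (hinge_rpow_identity (Y j) p hp1).symm
    calc ∑ i, (max (X i) 0) ^ p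
        = ∑ i, ∫ c in Set.Ioi (0:ℝ), max (X i - c) 0 * (p * (p-1) * c ^ (p-2)) :=
          Finset.sum_congr rfl (fun i _ => key i)
      _ = ∫ c in Set.Ioi (0:ℝ), ∑ i, max (X i - c) 0 * (p * (p-1) * c ^ (p-2)) :=
          (integral_finset_sum _ (fun i _ => hinge_kernel_integrable (X i) p hp1)).symm
      _ ≤ ∫ c in Set.Ioi (0:ℝ), ∑ j, max (Y j - c) 0 * (p * (p-1) * c ^ (p-2)) := by
          apply setIntegral_mono_on
          · exact integrable_finset_sum _ (fun i _ => hinge_kernel_integrable (X i) p hp1)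
          · exact integrable_finset_sum _ (fun j _ => hinge_kernel_integrable (Y j) p hp1)
          · exact measurableSet_Ioi
          · intro c hc
            have hc0 : (0:ℝ) < c := Set.mem_Ioi.mp hc
            rw [← Finset.sum_mul, ← Finset.sum_mul]
            apply mul_le_mul_of_nonneg_right (h c hc0.le)
            have h9 : (0:ℝ) ≤ c ^ (p-2) := Real.rpow_nonneg hc0.le _
            have h10 : (0:ℝ) ≤ p * (p-1) := by nlinarith
            exact mul_nonneg h10 h9
      _ = ∑ j, (max (Y j) 0) ^ p := by
          rw [integral_finset_sum _ (fun j _ => hinge_kernel_integrable (Y j) p hp1)]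
          exact Finset.sum_congr rfl (fun j _ => (key' j).symm)



variable {F : Type*} [SeminormedAddCommGroup F] {n : ℕ} {ρ : ℝ}

lemma radLq_nonneg (x : Fin n → F) : 0 ≤ radLq ρ x := by
  apply Real.rpow_nonneg
  apply div_nonneg _ (by positivity)
  exact Finset.sum_nonneg fun ε _ => Real.rpow_nonneg (norm_nonneg _) _

lemma radLq_mono_of_norm_le (hρ : 0 ≤ ρ) (x y : Fin n → F)
    (h : ∀ ε : Fin n → Bool,
      ‖∑ j, (if ε j then x j else -x j)‖ ≤ ‖∑ j, (if ε j then y j else -y j)‖) :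
    radLq ρ x ≤ radLq ρ y := by
  apply Real.rpow_le_rpow
  · apply div_nonneg _ (by positivity)
    exact Finset.sum_nonneg fun ε _ => Real.rpow_nonneg (norm_nonneg _) _
  · apply div_le_div_of_nonneg_right _ (by positivity)
    exact Finset.sum_le_sum fun ε _ => Real.rpow_le_rpow (norm_nonneg _) (h ε) hρ
  · positivity

lemma radLq_congr (x y : Fin n → F) (h : ∀ j, x j = y j) : radLq ρ x = radLq ρ y := by
  unfold radLq
  congr 2
  apply Finset.sum_congr rfl
  intro ε _
  congr 2
  exact Finset.sum_congr rfl fun j _ => by rw [h j]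

lemma radLq_add_le (hρ : 1 ≤ ρ) (x y : Fin n → F) :
    radLq ρ (fun j => x j + y j) ≤ radLq ρ x + radLq ρ y := by
  have hρ0 : (0:ℝ) < ρ := by linarith
  set Sx : (Fin n → Bool) → ℝ := fun ε => ‖∑ j, (if ε j then x j else -x j)‖ with hSx
  set Sy : (Fin n → Bool) → ℝ := fun ε => ‖∑ j, (if ε j then y j else -y j)‖ with hSy
  have hsplit : ∀ ε : Fin n → Bool,
      ‖∑ j, (if ε j then x j + y j else -(x j + y j))‖ ≤ Sx ε + Sy ε := by
    intro ε
    have e : ∑ j, (if ε j then x j + y j else -(x j + y j))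
        = (∑ j, (if ε j then x j else -x j)) + ∑ j, (if ε j then y j else -y j) := by
      rw [← Finset.sum_add_distrib]
      apply Finset.sum_congr rfl
      intro j _
      by_cases h : ε j <;> simp [h, neg_add] <;> abel
    rw [e]
    exact norm_add_le _ _
  have step1 : radLq ρ (fun j => x j + y j)
      ≤ ((∑ ε : Fin n → Bool, (Sx ε + Sy ε) ^ ρ) / 2 ^ n) ^ (1/ρ) := by
    apply Real.rpow_le_rpow
    · apply div_nonneg _ (by positivity)
      exact Finset.sum_nonneg fun ε _ => Real.rpow_nonneg (norm_nonneg _) _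
    · apply div_le_div_of_nonneg_right _ (by positivity)
      exact Finset.sum_le_sum fun ε _ =>
        Real.rpow_le_rpow (norm_nonneg _) (hsplit ε) hρ0.le
    · positivity
  -- Minkowski
  have mink := Real.Lp_add_le Finset.univ Sx Sy hρ
  have habs : ∀ ε, |Sx ε + Sy ε| = Sx ε + Sy ε := fun ε =>
    abs_of_nonneg (add_nonneg (norm_nonneg _) (norm_nonneg _))
  have habsx : ∀ ε, |Sx ε| = Sx ε := fun ε => abs_of_nonneg (norm_nonneg _)
  have habsy : ∀ ε, |Sy ε| = Sy ε := fun ε => abs_of_nonneg (norm_nonneg _)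
  have exx : (∑ i : Fin n → Bool, |Sx i + Sy i| ^ ρ) = ∑ i : Fin n → Bool, (Sx i + Sy i) ^ ρ :=
    Finset.sum_congr rfl (fun ε _ => by rw [habs ε])
  have exy : (∑ i : Fin n → Bool, |Sx i| ^ ρ) = ∑ i : Fin n → Bool, Sx i ^ ρ :=
    Finset.sum_congr rfl (fun ε _ => by rw [habsx ε])
  have exz : (∑ i : Fin n → Bool, |Sy i| ^ ρ) = ∑ i : Fin n → Bool, Sy i ^ ρ :=
    Finset.sum_congr rfl (fun ε _ => by rw [habsy ε])
  rw [exx, exy, exz] at mink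
  -- divide by (2^n)^(1/ρ)
  have hD : (0:ℝ) < ((2:ℝ) ^ n) ^ (1/ρ) := by positivity
  have key : ((∑ ε : Fin n → Bool, (Sx ε + Sy ε) ^ ρ) / 2 ^ n) ^ (1/ρ)
      ≤ radLq ρ x + radLq ρ y := by
    rw [Real.div_rpow (Finset.sum_nonneg fun ε _ =>
      Real.rpow_nonneg (add_nonneg (norm_nonneg _) (norm_nonneg _)) _) (by positivity)]
    unfold radLq
    rw [Real.div_rpow (Finset.sum_nonneg fun ε _ =>
      Real.rpow_nonneg (norm_nonneg _) _) (by positivity),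
      Real.div_rpow (Finset.sum_nonneg fun ε _ =>
      Real.rpow_nonneg (norm_nonneg _) _) (by positivity)]
    rw [← add_div]
    exact div_le_div_of_nonneg_right mink hD.le
  exact step1.trans key

lemma radLq_zero (hρ : ρ ≠ 0) : radLq ρ (fun _ : Fin n => (0:F)) = 0 := by
  unfold radLq
  have : ∀ ε : Fin n → Bool, ‖∑ j : Fin n, (if ε j then (0:F) else -(0:F))‖ ^ ρ = 0 := by
    intro ε
    have : ∑ j : Fin n, (if ε j then (0:F) else -(0:F)) = 0 := by
      apply Finset.sum_eq_zero; intro j _; by_cases h : ε j <;> simp [h]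
    rw [this, norm_zero, Real.zero_rpow hρ]
  rw [Finset.sum_congr rfl (fun ε _ => this ε)]
  simp
  rw [Real.zero_rpow (by simpa using hρ)]

lemma radLq_sum_le (hρ : 1 ≤ ρ) {ι : Type*} (s : Finset ι) (g : ι → Fin n → F) :
    radLq ρ (fun j => ∑ i ∈ s, g i j) ≤ ∑ i ∈ s, radLq ρ (g i) := by
  classical
  induction s using Finset.induction with
  | empty =>
      simp only [Finset.sum_empty]
      rw [radLq_zero (by linarith : ρ ≠ 0)]
  | insert a s' hni IH =>
      rw [Finset.sum_insert hni]
      calc radLq ρ (fun j => ∑ i ∈ insert a s', g i j)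
          = radLq ρ (fun j => g a j + ∑ i ∈ s', g i j) :=
            radLq_congr _ _ (fun j => Finset.sum_insert hni)
        _ ≤ radLq ρ (g a) + radLq ρ (fun j => ∑ i ∈ s', g i j) := radLq_add_le hρ _ _
        _ ≤ radLq ρ (g a) + ∑ i ∈ s', radLq ρ (g i) := by linarith [IH]

lemma radLq_smul {G : Type*} [NormedAddCommGroup G] [NormedSpace ℝ G] {n : ℕ} {ρ : ℝ}
    (hρ0 : 0 < ρ) (c : ℝ) (x : Fin n → G) :
    radLq ρ (fun j => c • x j) = |c| * radLq ρ x := by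
  unfold radLq
  have e : ∀ ε : Fin n → Bool,
      ‖∑ j, (if ε j then c • x j else -(c • x j))‖ ^ ρ
      = |c| ^ ρ * ‖∑ j, (if ε j then x j else -x j)‖ ^ ρ := by
    intro ε
    have e1 : ∑ j, (if ε j then c • x j else -(c • x j)) = c • ∑ j, (if ε j then x j else -x j) := by
      rw [Finset.smul_sum]
      apply Finset.sum_congr rfl
      intro j _
      by_cases h : ε j <;> simp [h, smul_neg]
    rw [e1, norm_smul, Real.norm_eq_abs,
      Real.mul_rpow (abs_nonneg _) (norm_nonneg _)]
  rw [Finset.sum_congr rfl (fun ε _ => e ε), ← Finset.mul_sum, mul_div_assoc,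
    Real.mul_rpow (by positivity) (by positivity)]
  congr 1
  rw [one_div]
  exact Real.rpow_rpow_inv (abs_nonneg c) hρ0.ne'
  
lemma radLq_single (hρ0 : 0 < ρ) (v : F) : radLq ρ (fun _ : Fin 1 => v) = ‖v‖ := by
  unfold radLq
  have e : ∀ ε : Fin 1 → Bool, ‖∑ j : Fin 1, (if ε j then v else -v)‖ ^ ρ = ‖v‖ ^ ρ := by
    intro ε
    rw [Fin.sum_univ_one]
    by_cases h : ε 0 <;> simp [h]
  rw [Finset.sum_congr rfl (fun ε _ => e ε), Finset.sum_const]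
  have hcard : (Finset.univ : Finset (Fin 1 → Bool)).card = 2 := by
    simp [Fintype.card_fun]
  rw [hcard]
  have : (2 : ℕ) • ‖v‖ ^ ρ / 2 ^ 1 = ‖v‖ ^ ρ := by
    simp [nsmul_eq_mul]
  rw [this, one_div]
  exact Real.rpow_rpow_inv (norm_nonneg v) hρ0.ne'



def Ball (E : Type u) [NormedAddCommGroup E] [NormedSpace ℝ E] : Type u :=
  {f : E →L[ℝ] ℝ // ‖f‖ ≤ 1}

instance : Nonempty (Ball E) := ⟨⟨0, by simp⟩⟩

/-- the function space -/
abbrev FF (E : Type u) [NormedAddCommGroup E] [NormedSpace ℝ E] : Type u :=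
  ↥(lp (fun _ : Ball E => ℝ) ⊤)

noncomputable def mkF (g : Ball E → ℝ) (C : ℝ) (hg : ∀ f, |g f| ≤ C) : FF E :=
  ⟨g, by
    apply memℓp_infty
    refine ⟨C, ?_⟩
    rintro _ ⟨f, rfl⟩
    simpa [Real.norm_eq_abs] using hg f⟩

@[simp] lemma mkF_coe (g : Ball E → ℝ) (C : ℝ) (hg : ∀ f, |g f| ≤ C) (f : Ball E) :
    (mkF g C hg : ∀ _ : Ball E, ℝ) f = g f := rfl

lemma coeFn_sum {ι : Type*} (s : Finset ι) (w : ι → FF E) (f : Ball E) :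
    ((∑ i ∈ s, w i : FF E) : ∀ _ : Ball E, ℝ) f = ∑ i ∈ s, (w i : ∀ _ : Ball E, ℝ) f := by
  classical
  induction s using Finset.induction with
  | empty => simp
  | insert a s' hni IH =>
      rw [Finset.sum_insert hni, Finset.sum_insert hni, lp.coeFn_add, Pi.add_apply, IH]

lemma norm_FF (z : FF E) : ‖z‖ = ⨆ f : Ball E, |(z : ∀ _ : Ball E, ℝ) f| := by
  rw [lp.norm_eq_ciSup]
  simp [Real.norm_eq_abs]

/-- tpair applied to a constant family on an elementary diagonal tensor -/
lemma tpair_tprod {k : ℕ} (f : E →L[ℝ] ℝ) (v : E) :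
    tpair (fun _ => f) (⨂ₜ[ℝ] _ : Fin k, v) = (f v) ^ k := by
  unfold tpair
  rw [PiTensorProduct.lift.tprod]
  simp [MultilinearMap.compLinearMap_apply, MultilinearMap.mkPiAlgebra_apply]

lemma symInjNorm_eq {k : ℕ} (W : ⨂[ℝ] _ : Fin k, E) :
    symInjNorm W = ⨆ f : Ball E, |tpair (fun _ => f.1) W| := by
  unfold symInjNorm iSup
  congr 1
  ext r
  constructor
  · rintro ⟨f, hf, rfl⟩
    exact ⟨⟨f, hf⟩, rfl⟩
  · rintro ⟨⟨f, hf⟩, rfl⟩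
    exact ⟨f, hf, rfl⟩

/-- |a^n - b^n| ≤ n |a - b| for |a|, |b| ≤ 1 -/
lemma pow_lip (a b : ℝ) (ha : |a| ≤ 1) (hb : |b| ≤ 1) (n : ℕ) :
    |a ^ n - b ^ n| ≤ n * |a - b| := by
  induction n with
  | zero => simp
  | succ n IH =>
      have e : a ^ (n+1) - b ^ (n+1) = a ^ n * (a - b) + (a ^ n - b ^ n) * b := by ring
      have h1 : |a ^ n| ≤ 1 := by
        rw [abs_pow]; exact pow_le_one₀ (abs_nonneg a) ha
      calc |a ^ (n+1) - b ^ (n+1)| = |a ^ n * (a - b) + (a ^ n - b ^ n) * b| := by rw [e]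
        _ ≤ |a ^ n * (a - b)| + |(a ^ n - b ^ n) * b| := abs_add_le _ _
        _ ≤ 1 * |a - b| + (n * |a - b|) * 1 := by
            apply add_le_add
            · rw [abs_mul]
              exact mul_le_mul_of_nonneg_right h1 (abs_nonneg _)
            · rw [abs_mul]
              exact mul_le_mul IH hb (abs_nonneg _) (by positivity)
        _ = (↑(n+1) : ℝ) * |a - b| := by push_cast; ring
  
/-- two-variable product version -/
lemma pow_prod_lip (a b a' b' : ℝ) (ha : |a| ≤ 1) (hb : |b| ≤ 1) (ha' : |a'| ≤ 1) (hb' : |b'| ≤ 1)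
    (i m : ℕ) :
    |a ^ i * b ^ m - a' ^ i * b' ^ m| ≤ i * |a - a'| + m * |b - b'| := by
  have e : a ^ i * b ^ m - a' ^ i * b' ^ m
      = (a ^ i - a' ^ i) * b ^ m + a' ^ i * (b ^ m - b' ^ m) := by ring
  have h1 : |b ^ m| ≤ 1 := by rw [abs_pow]; exact pow_le_one₀ (abs_nonneg b) hb
  have h2 : |a' ^ i| ≤ 1 := by rw [abs_pow]; exact pow_le_one₀ (abs_nonneg a') ha'
  calc |a ^ i * b ^ m - a' ^ i * b' ^ m|
      = |(a ^ i - a' ^ i) * b ^ m + a' ^ i * (b ^ m - b' ^ m)| := by rw [e]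
    _ ≤ |(a ^ i - a' ^ i) * b ^ m| + |a' ^ i * (b ^ m - b' ^ m)| := abs_add_le _ _
    _ ≤ (i * |a - a'|) * 1 + 1 * (m * |b - b'|) := by
        apply add_le_add
        · rw [abs_mul]
          exact mul_le_mul (pow_lip a a' ha ha' i) h1 (abs_nonneg _) (by positivity)
        · rw [abs_mul]
          exact mul_le_mul h2 (pow_lip b b' hb hb' m) (abs_nonneg _) zero_le_one
    _ = i * |a - a'| + m * |b - b'| := by ring

/-- evaluation through the normalized vector -/
lemma eval_normalize (f : E →L[ℝ] ℝ) (v : E) :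
    f v = ‖v‖ * f (‖v‖⁻¹ • v) := by
  by_cases hv : v = 0
  · simp [hv]
  · rw [_root_.map_smul, smul_eq_mul]
    rw [← mul_assoc, mul_inv_cancel₀ (norm_ne_zero_iff.mpr hv), one_mul]

lemma norm_normalize_le (v : E) : ‖(‖v‖⁻¹ • v : E)‖ ≤ 1 := by
  by_cases hv : v = 0
  · simp [hv]
  · rw [norm_smul, norm_inv, norm_norm, inv_mul_cancel₀ (norm_ne_zero_iff.mpr hv)]

lemma ball_eval_le (f : Ball E) (v : E) : |f.1 v| ≤ ‖v‖ := by
  calc |f.1 v| ≤ ‖f.1‖ * ‖v‖ := f.1.le_opNorm v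
    _ ≤ 1 * ‖v‖ := mul_le_mul_of_nonneg_right f.2 (norm_nonneg v)
    _ = ‖v‖ := one_mul _


open MeasureTheory ProbabilityTheory

variable {Ω : Type v} [MeasurableSpace Ω]

def SS : Bool → Set ℝ
  | true => {1}
  | false => ({1} : Set ℝ)ᶜ

@[simp] lemma SS_true : SS true = {1} := rfl
@[simp] lemma SS_false : SS false = ({1} : Set ℝ)ᶜ := rfl

lemma SS_measurable (b : Bool) : MeasurableSet (SS b) := by
  cases b
  · exact (measurableSet_singleton 1).compl
  · exact measurableSet_singleton 1

instance instMSC (M : ℕ) : MeasurableSingletonClass (Fin M → Bool) := by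
  constructor
  intro b
  have e : ({b} : Set (Fin M → Bool)) = ⋂ j, (fun v => v j) ⁻¹' {b j} := by
    ext v
    simp [funext_iff]
  rw [e]
  exact MeasurableSet.iInter fun j => measurable_pi_apply j (measurableSet_singleton (b j))

lemma rad_integral (μ : Measure Ω) [IsProbabilityMeasure μ] (M : ℕ)
    (r : Fin M → Ω → ℝ)
    (hr_meas : ∀ j, Measurable (r j))
    (hr_half : ∀ j, μ {ω | r j ω = 1} = 1/2)
    (hr_indep : iIndepFun r μ)
    (G : (Fin M → Bool) → ℝ) :
    ∫ ω, G (fun j => decide (r j ω = 1)) ∂μ = (∑ b, G b) / 2 ^ M := by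
  classical
  set R : Ω → (Fin M → Bool) := fun ω j => decide (r j ω = 1) with hR
  have hmeas1 : ∀ j, MeasurableSet {ω | r j ω = 1} := fun j =>
    (hr_meas j) (measurableSet_singleton 1)
  have hRmeas : Measurable R := by
    apply measurable_pi_lambda
    intro j
    apply measurable_to_countable'
    intro x
    cases x
    · have e : (fun ω => decide (r j ω = 1)) ⁻¹' {false} = {ω | r j ω = 1}ᶜ := by
        ext ω; simp
      rw [e]; exact (hmeas1 j).compl
    · have e : (fun ω => decide (r j ω = 1)) ⁻¹' {true} = {ω | r j ω = 1} := by
        ext ω; simp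
      rw [e]; exact hmeas1 j
  set ν := Measure.map R μ with hν
  haveI : IsProbabilityMeasure ν := Measure.isProbabilityMeasure_map hRmeas.aemeasurable
  have hsing : ∀ b : Fin M → Bool, ν {b} = (1/2 : ENNReal) ^ M := by
    intro b
    rw [hν, Measure.map_apply hRmeas (measurableSet_singleton b)]
    have e : R ⁻¹' {b} = ⋂ j, (r j) ⁻¹' SS (b j) := by
      ext ω
      simp only [Set.mem_preimage, Set.mem_singleton_iff, Set.mem_iInter, funext_iff, hR]
      constructor
      · intro h j
        have hj := h j
        cases hb : b j
        · rw [hb] at hj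
          have h2 : ¬ (r j ω = 1) := by simpa using hj
          simp [SS, h2]
        · rw [hb] at hj
          have h2 : r j ω = 1 := by simpa using hj
          simp [SS, h2]
      · intro h j
        have hj := h j
        cases hb : b j
        · rw [hb] at hj
          simp only [SS_false, Set.mem_compl_iff, Set.mem_singleton_iff] at hj
          simp [hj]
        · rw [hb] at hj
          simp only [SS_true, Set.mem_singleton_iff] at hj
          simp [hj]
    rw [e]
    have hprod := (iIndepFun_iff_measure_inter_preimage_eq_mul.mp hr_indep) Finset.univ
      (sets := fun j => SS (b j)) (fun j _ => SS_measurable (b j))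
    have e2 : (⋂ j ∈ Finset.univ, (r j) ⁻¹' SS (b j)) = ⋂ j, (r j) ⁻¹' SS (b j) := by
      simp
    rw [e2] at hprod
    rw [hprod]
    have hfac : ∀ j, μ ((r j) ⁻¹' SS (b j)) = (1/2 : ENNReal) := by
      intro j
      have hpre : (r j) ⁻¹' ({1} : Set ℝ) = {ω | r j ω = 1} := by
        ext ω; simp
      cases hb : b j
      · rw [SS_false, Set.preimage_compl, hpre, prob_compl_eq_one_sub (hmeas1 j), hr_half j]
        norm_num
      · rw [SS_true, hpre, hr_half j]
    rw [Finset.prod_congr rfl (fun j _ => hfac j)]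
    simp
  have hGmeas : AEStronglyMeasurable G ν := Integrable.of_finite.aestronglyMeasurable
  have h1 : ∫ ω, G (R ω) ∂μ = ∫ b, G b ∂ν := (integral_map hRmeas.aemeasurable hGmeas).symm
  have h2 : ∫ b, G b ∂ν = ∑ b, (ν {b}).toReal • G b := integral_fintype Integrable.of_finite
  have htr : ((1/2 : ENNReal) ^ M).toReal = ((2:ℝ) ^ M)⁻¹ := by
    rw [ENNReal.toReal_pow, show ((1:ENNReal)/2).toReal = (2:ℝ)⁻¹ by norm_num, inv_pow]
  have h3 : ∀ b : Fin M → Bool, (ν {b}).toReal • G b = G b * ((2:ℝ)^M)⁻¹ := by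
    intro b
    rw [hsing b, htr, smul_eq_mul, mul_comm]
  rw [h1, h2, Finset.sum_congr rfl (fun b _ => h3 b), ← Finset.sum_mul, ← div_eq_mul_inv]


/-! ### additional sup/rpow helpers -/

lemma ciSup_max {T : Type*} [Nonempty T] (g h : T → ℝ)
    (bg : BddAbove (Set.range g)) (bh : BddAbove (Set.range h)) :
    (⨆ t, max (g t) (h t)) = max (⨆ t, g t) (⨆ t, h t) := by
  obtain ⟨Bg, hBg⟩ := bg
  obtain ⟨Bh, hBh⟩ := bh
  have hBg' : ∀ t, g t ≤ Bg := fun t => hBg ⟨t, rfl⟩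
  have hBh' : ∀ t, h t ≤ Bh := fun t => hBh ⟨t, rfl⟩
  have bmax : BddAbove (Set.range fun t => max (g t) (h t)) :=
    bddAbove_range_of_bound _ (max Bg Bh) fun t => max_le_max (hBg' t) (hBh' t)
  apply le_antisymm
  · exact ciSup_le fun t => max_le_max (le_ciSup ⟨Bg, hBg⟩ t) (le_ciSup ⟨Bh, hBh⟩ t)
  · apply max_le
    · exact ciSup_mono bmax fun t => le_max_left _ _
    · exact ciSup_mono bmax fun t => le_max_right _ _

lemma rpow_max_le (a b ρ : ℝ) (ha : 0 ≤ a) (hb : 0 ≤ b) :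
    (max a b) ^ ρ ≤ a ^ ρ + b ^ ρ := by
  rcases le_total a b with h | h
  · rw [max_eq_right h]
    have := Real.rpow_nonneg ha ρ
    linarith
  · rw [max_eq_left h]
    have := Real.rpow_nonneg hb ρ
    linarith

lemma max_max_zero (a b : ℝ) : max (max a b) 0 = max (max a 0) (max b 0) := by
  have h := max_max_max_comm a 0 b 0
  rw [max_self] at h
  exact h.symm

lemma rpow_pull_const {M : ℕ} (p C : ℝ) (hp : 0 < p) (hC : 0 ≤ C) (a : Fin M → ℝ)
    (ha : ∀ j, 0 ≤ a j) :
    (∑ j, (C * a j) ^ p) ^ (1/p) = C * (∑ j, a j ^ p) ^ (1/p) := by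
  have e : ∀ j, (C * a j) ^ p = C ^ p * a j ^ p := fun j => Real.mul_rpow hC (ha j)
  rw [Finset.sum_congr rfl fun j _ => e j, ← Finset.mul_sum,
    Real.mul_rpow (Real.rpow_nonneg hC _)
      (Finset.sum_nonneg fun j _ => Real.rpow_nonneg (ha j) _)]
  congr 1
  rw [one_div]
  exact Real.rpow_rpow_inv hC hp.ne'

lemma avg_split {P1 P2 : Type*} [Fintype P1] [Fintype P2] (p : ℝ) (hp : 1 ≤ p)
    (a : P1 → ℝ) (b : P2 → ℝ) (ha : ∀ y, 0 ≤ a y) (hb : ∀ y, 0 ≤ b y)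
    (D1 D2 : ℝ) (hD1 : 0 < D1) (hD2 : 0 < D2)
    (hc1 : ((Fintype.card P1 : ℕ) : ℝ) = D1) (hc2 : ((Fintype.card P2 : ℕ) : ℝ) = D2) :
    ((∑ y : P1 × P2, (a y.1 + b y.2) ^ p) / (D1 * D2)) ^ (1/p)
      ≤ ((∑ y : P1, a y ^ p) / D1) ^ (1/p) + ((∑ y : P2, b y ^ p) / D2) ^ (1/p) := by
  have mink := Real.Lp_add_le (Finset.univ : Finset (P1 × P2))
    (fun y => a y.1) (fun y => b y.2) hp
  have ea : (∑ y : P1 × P2, |a y.1| ^ p) = D2 * ∑ z : P1, a z ^ p := by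
    rw [Fintype.sum_prod_type]
    have h1 : ∀ y1 : P1, (∑ _y2 : P2, |a y1| ^ p) = D2 * a y1 ^ p := by
      intro y1
      rw [Finset.sum_const, abs_of_nonneg (ha y1), nsmul_eq_mul, Finset.card_univ, hc2]
    rw [Finset.sum_congr rfl fun y1 _ => h1 y1, ← Finset.mul_sum]
  have eb : (∑ y : P1 × P2, |b y.2| ^ p) = D1 * ∑ z : P2, b z ^ p := by
    rw [Fintype.sum_prod_type]
    have h1 : ∀ y1 : P1, (∑ y2 : P2, |b y2| ^ p) = ∑ y2 : P2, b y2 ^ p :=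
      fun y1 => Finset.sum_congr rfl fun y2 _ => by rw [abs_of_nonneg (hb y2)]
    rw [Finset.sum_congr rfl fun y1 _ => h1 y1, Finset.sum_const, nsmul_eq_mul,
      Finset.card_univ, hc1]
  have eab : (∑ y : P1 × P2, |a y.1 + b y.2| ^ p) = ∑ y : P1 × P2, (a y.1 + b y.2) ^ p :=
    Finset.sum_congr rfl fun y _ => by rw [abs_of_nonneg (add_nonneg (ha y.1) (hb y.2))]
  rw [eab, ea, eb] at mink
  have h1 : ((∑ y : P1 × P2, (a y.1 + b y.2) ^ p) / (D1 * D2)) ^ (1/p)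
      = (∑ y : P1 × P2, (a y.1 + b y.2) ^ p) ^ (1/p) / (D1*D2) ^ (1/p) :=
    Real.div_rpow (Finset.sum_nonneg fun y _ =>
      Real.rpow_nonneg (add_nonneg (ha y.1) (hb y.2)) _) (by positivity) _
  have h2 : ((∑ z : P1, a z ^ p) / D1) ^ (1/p)
      = (D2 * ∑ z : P1, a z ^ p) ^ (1/p) / (D1*D2) ^ (1/p) := by
    rw [Real.mul_rpow hD2.le (Finset.sum_nonneg fun z _ => Real.rpow_nonneg (ha z) _),
      Real.div_rpow (Finset.sum_nonneg fun z _ => Real.rpow_nonneg (ha z) _) hD1.le,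
      Real.mul_rpow hD1.le hD2.le]
    rw [div_eq_div_iff (by positivity) (by positivity)]
    ring
  have h3 : ((∑ z : P2, b z ^ p) / D2) ^ (1/p)
      = (D1 * ∑ z : P2, b z ^ p) ^ (1/p) / (D1*D2) ^ (1/p) := by
    rw [Real.mul_rpow hD1.le (Finset.sum_nonneg fun z _ => Real.rpow_nonneg (hb z) _),
      Real.div_rpow (Finset.sum_nonneg fun z _ => Real.rpow_nonneg (hb z) _) hD2.le,
      Real.mul_rpow hD1.le hD2.le]
    rw [div_eq_div_iff (by positivity) (by positivity)]
    ring
  rw [h1, h2, h3, ← add_div]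
  exact div_le_div_of_nonneg_right mink (by positivity)

/-! ### the Ψ vectors -/

noncomputable def Psi (k i : ℕ) (dv yv : E) : FF E :=
  mkF (fun f => (f.1 dv) ^ i * (f.1 yv) ^ (k - i)) (‖dv‖ ^ i * ‖yv‖ ^ (k - i))
    (fun f => by
      rw [abs_mul, abs_pow, abs_pow]
      exact mul_le_mul (pow_le_pow_left₀ (abs_nonneg _) (ball_eval_le f dv) i)
        (pow_le_pow_left₀ (abs_nonneg _) (ball_eval_le f yv) (k-i))
        (by positivity) (by positivity))

@[simp] lemma Psi_coe (k i : ℕ) (dv yv : E) (f : Ball E) :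
    (Psi k i dv yv : ∀ _ : Ball E, ℝ) f = (f.1 dv) ^ i * (f.1 yv) ^ (k - i) := rfl

/-! ### the per-`i` estimate -/

lemma per_i_bound (p τ : ℝ) (hp1 : 1 ≤ p) (hτ1 : 1 ≤ τ)
    (hτ : ∀ (n : ℕ) (v : Fin n → E), radLq p v ≤ τ * (∑ j, ‖v j‖ ^ p) ^ (1/p))
    (k i : ℕ) (hi1 : 1 ≤ i) (hik : i ≤ k) {M : ℕ} (d y : Fin M → E) :
    radLq p (fun j => Psi k i (d j) (y j))
      ≤ 8 * k * τ * (∑ j, (‖d j‖ ^ i * ‖y j‖ ^ (k - i)) ^ p) ^ (1/p) := by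
  have hp0 : (0:ℝ) < p := by linarith
  have hk1 : 1 ≤ k := le_trans hi1 hik
  have hkR : (1:ℝ) ≤ (k:ℝ) := by exact_mod_cast hk1
  have hτ0 : (0:ℝ) ≤ τ := by linarith
  set c : Fin M → ℝ := fun j => ‖d j‖ ^ i * ‖y j‖ ^ (k - i) with hc
  have hc0 : ∀ j, 0 ≤ c j := fun j => by rw [hc]; positivity
  set dh : Fin M → E := fun j => ‖d j‖⁻¹ • d j with hdh
  set yh : Fin M → E := fun j => ‖y j‖⁻¹ • y j with hyh
  set φf : Fin M → Ball E → ℝ := fun j f => (f.1 (d j)) ^ i * (f.1 (y j)) ^ (k - i) with hφf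
  set sf : Fin M → Ball E → ℝ := fun j f => ((k:ℝ) * c j) * (f.1 (dh j)) with hsf
  set uf : Fin M → Ball E → ℝ := fun j f => ((k:ℝ) * c j) * (f.1 (yh j)) with huf
  have hrep : ∀ j f, φf j f = c j * ((f.1 (dh j)) ^ i * (f.1 (yh j)) ^ (k - i)) := by
    intro j f
    rw [hφf]
    dsimp only
    rw [eval_normalize f.1 (d j), eval_normalize f.1 (y j), mul_pow, mul_pow, hc, hdh, hyh]
    dsimp only
    ring
  have hadh : ∀ j (f : Ball E), |f.1 (dh j)| ≤ 1 := fun j f =>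
    (ball_eval_le f _).trans (norm_normalize_le _)
  have hayh : ∀ j (f : Ball E), |f.1 (yh j)| ≤ 1 := fun j f =>
    (ball_eval_le f _).trans (norm_normalize_le _)
  have hkc0 : ∀ j, (0:ℝ) ≤ (k:ℝ) * c j := fun j =>
    mul_nonneg (by positivity) (hc0 j)
  have habs_sf : ∀ j f, |sf j f| = (k:ℝ) * c j * |f.1 (dh j)| := by
    intro j f
    rw [hsf]; dsimp only
    rw [abs_mul, abs_of_nonneg (hkc0 j)]
  have habs_uf : ∀ j f, |uf j f| = (k:ℝ) * c j * |f.1 (yh j)| := by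
    intro j f
    rw [huf]; dsimp only
    rw [abs_mul, abs_of_nonneg (hkc0 j)]
  have hφbound : ∀ j f, |φf j f| ≤ c j * |f.1 (dh j)| := by
    intro j f
    rw [hrep j f, abs_mul, abs_of_nonneg (hc0 j), abs_mul, abs_pow, abs_pow]
    apply mul_le_mul_of_nonneg_left _ (hc0 j)
    calc |f.1 (dh j)| ^ i * |f.1 (yh j)| ^ (k-i)
        ≤ |f.1 (dh j)| ^ 1 * 1 :=
          mul_le_mul (pow_le_pow_of_le_one (abs_nonneg _) (hadh j f) hi1)
            (pow_le_one₀ (abs_nonneg _) (hayh j f)) (by positivity) (by positivity)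
      _ = |f.1 (dh j)| := by rw [pow_one, mul_one]
  have hφc : ∀ j f, |φf j f| ≤ c j := by
    intro j f
    refine (hφbound j f).trans ?_
    exact mul_le_of_le_one_right (hc0 j) (hadh j f)
  have hφ0 : ∀ j f, |φf j f| ≤ |sf j f| + |uf j f| := by
    intro j f
    have h1 := hφbound j f
    have h2 : c j * |f.1 (dh j)| ≤ (k:ℝ) * c j * |f.1 (dh j)| :=
      mul_le_mul_of_nonneg_right (le_mul_of_one_le_left (hc0 j) hkR) (abs_nonneg _)
    have h3 : (0:ℝ) ≤ (k:ℝ) * c j * |f.1 (yh j)| :=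
      mul_nonneg (hkc0 j) (abs_nonneg _)
    rw [habs_sf, habs_uf]
    linarith
  have hφL : ∀ j (f f' : Ball E),
      |φf j f - φf j f'| ≤ |sf j f - sf j f'| + |uf j f - uf j f'| := by
    intro j f f'
    rw [hrep j f, hrep j f']
    have e1 : c j * (f.1 (dh j) ^ i * f.1 (yh j) ^ (k-i))
        - c j * (f'.1 (dh j) ^ i * f'.1 (yh j) ^ (k-i))
        = c j * ((f.1 (dh j) ^ i * f.1 (yh j) ^ (k-i))
            - (f'.1 (dh j) ^ i * f'.1 (yh j) ^ (k-i))) := by ring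
    rw [e1, abs_mul, abs_of_nonneg (hc0 j)]
    have lip := pow_prod_lip (f.1 (dh j)) (f.1 (yh j)) (f'.1 (dh j)) (f'.1 (yh j))
      (hadh j f) (hayh j f) (hadh j f') (hayh j f') i (k-i)
    have e2 : sf j f - sf j f' = ((k:ℝ) * c j) * (f.1 (dh j) - f'.1 (dh j)) := by
      rw [hsf]; dsimp only; ring
    have e3 : uf j f - uf j f' = ((k:ℝ) * c j) * (f.1 (yh j) - f'.1 (yh j)) := by
      rw [huf]; dsimp only; ring
    have e4 : |((k:ℝ) * c j) * (f.1 (dh j) - f'.1 (dh j))|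
        = (k:ℝ) * c j * |f.1 (dh j) - f'.1 (dh j)| := by
      rw [abs_mul, abs_of_nonneg (hkc0 j)]
    have e5 : |((k:ℝ) * c j) * (f.1 (yh j) - f'.1 (yh j))|
        = (k:ℝ) * c j * |f.1 (yh j) - f'.1 (yh j)| := by
      rw [abs_mul, abs_of_nonneg (hkc0 j)]
    rw [e2, e3, e4, e5]
    have hik2 : ((i:ℕ):ℝ) ≤ (k:ℝ) := by exact_mod_cast hik
    have hik3 : (((k-i:ℕ)):ℝ) ≤ (k:ℝ) := by exact_mod_cast Nat.sub_le k i
    calc c j * |f.1 (dh j) ^ i * f.1 (yh j) ^ (k-i) - f'.1 (dh j) ^ i * f'.1 (yh j) ^ (k-i)|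
        ≤ c j * ((i:ℝ) * |f.1 (dh j) - f'.1 (dh j)|
            + ((k-i:ℕ):ℝ) * |f.1 (yh j) - f'.1 (yh j)|) :=
          mul_le_mul_of_nonneg_left lip (hc0 j)
      _ ≤ c j * ((k:ℝ) * |f.1 (dh j) - f'.1 (dh j)| + (k:ℝ) * |f.1 (yh j) - f'.1 (yh j)|) := by
          apply mul_le_mul_of_nonneg_left _ (hc0 j)
          exact add_le_add (mul_le_mul_of_nonneg_right hik2 (abs_nonneg _))
            (mul_le_mul_of_nonneg_right hik3 (abs_nonneg _))
      _ = (k:ℝ) * c j * |f.1 (dh j) - f'.1 (dh j)|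
            + (k:ℝ) * c j * |f.1 (yh j) - f'.1 (yh j)| := by ring
  have hsb : ∀ j (f : Ball E), |sf j f| ≤ (k:ℝ) * c j := fun j f => by
    rw [habs_sf j f]
    exact mul_le_of_le_one_right (hkc0 j) (hadh j f)
  have hub : ∀ j (f : Ball E), |uf j f| ≤ (k:ℝ) * c j := fun j f => by
    rw [habs_uf j f]
    exact mul_le_of_le_one_right (hkc0 j) (hayh j f)
  -- the random sums and their suprema
  set Z : (Fin M → Bool) → Ball E → ℝ := fun ε f => ∑ j, sg (ε j) * φf j f with hZ
  set S : (Fin M → Bool) → ℝ := fun ε => ⨆ f : Ball E, Z ε f with hS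
  have hZbound : ∀ ε f, |Z ε f| ≤ ∑ j, c j := by
    intro ε f
    rw [hZ]; dsimp only
    refine (Finset.abs_sum_le_sum_abs _ _).trans ?_
    apply Finset.sum_le_sum
    intro j _
    rw [abs_mul, abs_sg, one_mul]
    exact hφc j f
  have hZbddAbove : ∀ ε, BddAbove (Set.range (Z ε)) :=
    fun ε => bddAbove_range_of_bound _ _ (fun f => (le_abs_self _).trans (hZbound ε f))
  have hZbddAbs : ∀ ε, BddAbove (Set.range fun f => |Z ε f|) :=
    fun ε => bddAbove_range_of_bound _ _ (fun f => hZbound ε f)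
  have hnorm : ∀ ε : Fin M → Bool,
      ‖∑ j, (if ε j then Psi k i (d j) (y j) else -Psi k i (d j) (y j))‖
        = ⨆ f : Ball E, |Z ε f| := by
    intro ε
    rw [norm_FF]
    apply iSup_congr
    intro f
    congr 1
    rw [coeFn_sum, hZ]
    dsimp only
    apply Finset.sum_congr rfl
    intro j _
    by_cases h : ε j
    · rw [if_pos h, h, sg_true, one_mul]
      rfl
    · rw [if_neg h, Bool.not_eq_true] at *
      rw [h, sg_false, neg_one_mul, lp.coeFn_neg, Pi.neg_apply]
      rfl
  have hflip : ∀ ε (f : Ball E), Z (fun j => !(ε j)) f = - Z ε f := by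
    intro ε f
    rw [hZ]; dsimp only
    have h1 : ∀ j : Fin M, sg (!(ε j)) * φf j f = -(sg (ε j) * φf j f) := fun j => by
      rw [sg_not]; ring
    rw [Finset.sum_congr rfl fun j _ => h1 j]
    exact Finset.sum_neg_distrib _
  have hmax : ∀ ε, (⨆ f : Ball E, |Z ε f|) = max (S ε) (S (fun j => !(ε j))) := by
    intro ε
    have e : ∀ f : Ball E, |Z ε f| = max (Z ε f) (Z (fun j => !(ε j)) f) := by
      intro f
      rw [hflip ε f]
      exact abs_eq_max_neg
    rw [iSup_congr e]
    exact ciSup_max _ _ (hZbddAbove ε) (hZbddAbove _)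
  have hpow : ∀ ε : Fin M → Bool,
      ‖∑ j, (if ε j then Psi k i (d j) (y j) else -Psi k i (d j) (y j))‖ ^ p
        ≤ (max (S ε) 0) ^ p + (max (S (fun j => !(ε j))) 0) ^ p := by
    intro ε
    rw [hnorm ε]
    have h0 : (0:ℝ) ≤ ⨆ f : Ball E, |Z ε f| :=
      le_ciSup_of_le (hZbddAbs ε) (Classical.arbitrary _) (abs_nonneg _)
    rw [hmax ε] at h0 ⊢
    have e : max (S ε) (S fun j => !(ε j)) = max (max (S ε) 0) (max (S fun j => !(ε j)) 0) := by
      rw [← max_max_zero, max_eq_left h0]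
    rw [e]
    exact rpow_max_le _ _ p (le_max_right _ _) (le_max_right _ _)
  have hsum1 : (∑ ε : Fin M → Bool,
        ‖∑ j, (if ε j then Psi k i (d j) (y j) else -Psi k i (d j) (y j))‖ ^ p)
      ≤ 2 * ∑ ε : Fin M → Bool, (max (S ε) 0) ^ p := by
    have hinv : Function.Involutive (fun ε : Fin M → Bool => fun j => !(ε j)) := by
      intro ε; funext j; simp
    have hre : (∑ ε : Fin M → Bool, (max (S (fun j => !(ε j))) 0) ^ p)
        = ∑ ε : Fin M → Bool, (max (S ε) 0) ^ p :=
      Fintype.sum_equiv (hinv.toPerm _)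
        (fun ε => (max (S (fun j => !(ε j))) 0) ^ p)
        (fun ε => (max (S ε) 0) ^ p) (fun ε => rfl)
    calc (∑ ε : Fin M → Bool,
          ‖∑ j, (if ε j then Psi k i (d j) (y j) else -Psi k i (d j) (y j))‖ ^ p)
        ≤ ∑ ε : Fin M → Bool, ((max (S ε) 0) ^ p + (max (S (fun j => !(ε j))) 0) ^ p) :=
          Finset.sum_le_sum fun ε _ => hpow ε
      _ = 2 * ∑ ε : Fin M → Bool, (max (S ε) 0) ^ p := by
          rw [Finset.sum_add_distrib, hre]; ring
  -- comparison principle + hinge-to-rpow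
  have hcard : ((Fintype.card (Fin M → Bool) : ℕ) : ℝ) = (2:ℝ)^M := by
    simp [Fintype.card_fun]
  set Ylin : (Fin M → Bool) → (Fin M → Bool) → ℝ := fun ε ε' =>
    ⨆ f : Ball E, ∑ j, (sg (ε j) * (2 * sf j f) + sg (ε' j) * (2 * uf j f)) with hYlin
  have hcomp : ∀ c0 : ℝ, 0 ≤ c0 →
      (∑ y2 : (Fin M → Bool) × (Fin M → Bool), max (S y2.1 - c0) 0)
        ≤ ∑ y2 : (Fin M → Bool) × (Fin M → Bool), max (Ylin y2.1 y2.2 - c0) 0 := by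
    intro c0 _
    have comp := compare_main M (fun _ : Ball E => 0) sf uf φf 0 (fun _ => by simp)
      (fun j => (k:ℝ) * c j) (fun j => (k:ℝ) * c j)
      hsb hub hφ0 hφL c0
    have ez : ∀ ε : Fin M → Bool,
        hsup (fun f : Ball E => (fun _ : Ball E => (0:ℝ)) f + ∑ j, sg (ε j) * φf j f) c0
          = max (S ε - c0) 0 := by
      intro ε
      unfold hsup
      congr 2
      apply iSup_congr
      intro f
      rw [hZ]
      dsimp only
      rw [zero_add]
    have ey : ∀ ε ε' : Fin M → Bool,
        hsup (fun f : Ball E => (fun _ : Ball E => (0:ℝ)) f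
            + ∑ j, (sg (ε j) * (2 * sf j f) + sg (ε' j) * (2 * uf j f))) c0
          = max (Ylin ε ε' - c0) 0 := by
      intro ε ε'
      unfold hsup
      congr 2
      apply iSup_congr
      intro f
      rw [zero_add]
    rw [Finset.sum_congr rfl (fun ε _ => ez ε)] at comp
    rw [Finset.sum_congr rfl (fun ε _ => Finset.sum_congr rfl (fun ε' _ => ey ε ε'))] at comp
    have eL : (∑ y2 : (Fin M → Bool) × (Fin M → Bool), max (S y2.1 - c0) 0)
        = (2:ℝ)^M * ∑ ε : Fin M → Bool, max (S ε - c0) 0 := by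
      rw [Fintype.sum_prod_type, Finset.mul_sum]
      apply Finset.sum_congr rfl
      intro ε _
      show (∑ _y : Fin M → Bool, (max (S ε - c0) 0)) = 2 ^ M * (max (S ε - c0) 0)
      rw [Finset.sum_const, nsmul_eq_mul, Finset.card_univ, hcard]
    have eR : (∑ y2 : (Fin M → Bool) × (Fin M → Bool), max (Ylin y2.1 y2.2 - c0) 0)
        = ∑ ε : Fin M → Bool, ∑ ε' : Fin M → Bool, max (Ylin ε ε' - c0) 0 := by
      rw [Fintype.sum_prod_type]
    rw [eL, eR]
    exact comp
  have hrpow := hinge_to_rpow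
    (fun y2 : (Fin M → Bool) × (Fin M → Bool) => S y2.1)
    (fun y2 : (Fin M → Bool) × (Fin M → Bool) => Ylin y2.1 y2.2)
    p hp1 hcomp
  -- the comparison vectors
  set vA : Fin M → E := fun j => (2 * ((k:ℝ) * c j)) • dh j with hvA
  set vB : Fin M → E := fun j => (2 * ((k:ℝ) * c j)) • yh j with hvB
  set NRM : (Fin M → Bool) × (Fin M → Bool) → ℝ :=
    fun y2 => ‖(∑ j, (if y2.1 j then vA j else -vA j)) + ∑ j, (if y2.2 j then vB j else -vB j)‖
    with hNRM
  have hYw : ∀ (ε ε' : Fin M → Bool) (f : Ball E),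
      (∑ j, (sg (ε j) * (2 * sf j f) + sg (ε' j) * (2 * uf j f)))
        = f.1 ((∑ j, (if ε j then vA j else -vA j)) + ∑ j, (if ε' j then vB j else -vB j)) := by
    intro ε ε' f
    rw [map_add, map_sum, map_sum, ← Finset.sum_add_distrib]
    apply Finset.sum_congr rfl
    intro j _
    have evA : f.1 (vA j) = 2 * ((k:ℝ) * c j) * f.1 (dh j) := by
      rw [hvA]; dsimp only; rw [_root_.map_smul, smul_eq_mul]
    have evB : f.1 (vB j) = 2 * ((k:ℝ) * c j) * f.1 (yh j) := by
      rw [hvB]; dsimp only; rw [_root_.map_smul, smul_eq_mul]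
    congr 1
    · by_cases h : ε j
      · rw [if_pos h, h, sg_true, evA, hsf]; dsimp only; ring
      · rw [Bool.not_eq_true] at h
        rw [if_neg (by rw [h]; simp), h, sg_false, map_neg, evA, hsf]; dsimp only; ring
    · by_cases h : ε' j
      · rw [if_pos h, h, sg_true, evB, huf]; dsimp only; ring
      · rw [Bool.not_eq_true] at h
        rw [if_neg (by rw [h]; simp), h, sg_false, map_neg, evB, huf]; dsimp only; ring
  have hYle : ∀ y2 : (Fin M → Bool) × (Fin M → Bool),
      (max (Ylin y2.1 y2.2) 0) ^ p ≤ NRM y2 ^ p := by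
    intro y2
    apply Real.rpow_le_rpow (le_max_right _ _) _ (by linarith : (0:ℝ) ≤ p)
    apply max_le _ (norm_nonneg _)
    rw [hYlin]; dsimp only
    apply ciSup_le
    intro f
    rw [hYw y2.1 y2.2 f]
    exact (le_abs_self _).trans (ball_eval_le f _)
  -- assemble
  have e1 : (∑ y2 : (Fin M → Bool) × (Fin M → Bool), (max (S y2.1) 0) ^ p)
      = (2:ℝ)^M * ∑ ε : Fin M → Bool, (max (S ε) 0) ^ p := by
    rw [Fintype.sum_prod_type, Finset.mul_sum]
    apply Finset.sum_congr rfl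
    intro ε _
    show (∑ _y : Fin M → Bool, (max (S ε) 0) ^ p) = 2 ^ M * (max (S ε) 0) ^ p
    rw [Finset.sum_const, nsmul_eq_mul, Finset.card_univ, hcard]
  have h2M : (0:ℝ) < (2:ℝ)^M := by positivity
  have main1 : (∑ ε : Fin M → Bool,
        ‖∑ j, (if ε j then Psi k i (d j) (y j) else -Psi k i (d j) (y j))‖ ^ p)
      ≤ 2 * ((∑ y2 : (Fin M → Bool) × (Fin M → Bool), NRM y2 ^ p) / 2^M) := by
    have h3 : (∑ y2 : (Fin M → Bool) × (Fin M → Bool), (max (S y2.1) 0) ^ p)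
        ≤ ∑ y2 : (Fin M → Bool) × (Fin M → Bool), NRM y2 ^ p :=
      hrpow.trans (Finset.sum_le_sum fun y2 _ => hYle y2)
    rw [e1] at h3
    have h4 : (∑ ε : Fin M → Bool, (max (S ε) 0) ^ p)
        ≤ (∑ y2 : (Fin M → Bool) × (Fin M → Bool), NRM y2 ^ p) / 2^M := by
      rw [le_div_iff₀ h2M]
      calc (∑ ε : Fin M → Bool, (max (S ε) 0) ^ p) * 2^M
          = (2:ℝ)^M * ∑ ε : Fin M → Bool, (max (S ε) 0) ^ p := by ring
        _ ≤ _ := h3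
    calc (∑ ε : Fin M → Bool,
          ‖∑ j, (if ε j then Psi k i (d j) (y j) else -Psi k i (d j) (y j))‖ ^ p)
        ≤ 2 * ∑ ε : Fin M → Bool, (max (S ε) 0) ^ p := hsum1
      _ ≤ 2 * ((∑ y2 : (Fin M → Bool) × (Fin M → Bool), NRM y2 ^ p) / 2^M) := by linarith
  have hNRM0 : ∀ y2, 0 ≤ NRM y2 := fun y2 => norm_nonneg _
  set D : ℝ := ((∑ y2 : (Fin M → Bool) × (Fin M → Bool), NRM y2 ^ p) / ((2:ℝ)^M * 2^M)) ^ (1/p)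
    with hD
  have hsumNRM : (0:ℝ) ≤ ∑ y2 : (Fin M → Bool) × (Fin M → Bool), NRM y2 ^ p :=
    Finset.sum_nonneg fun y2 _ => Real.rpow_nonneg (hNRM0 y2) _
  have main2 : radLq p (fun j => Psi k i (d j) (y j)) ≤ 2 * D := by
    unfold radLq
    have h5 : ((∑ ε : Fin M → Bool,
          ‖∑ j, (if ε j then Psi k i (d j) (y j) else -Psi k i (d j) (y j))‖ ^ p) / 2^M) ^ (1/p)
        ≤ ((2 * ((∑ y2 : (Fin M → Bool) × (Fin M → Bool), NRM y2 ^ p) / 2^M)) / 2^M) ^ (1/p) := by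
      apply Real.rpow_le_rpow
      · apply div_nonneg _ h2M.le
        exact Finset.sum_nonneg fun ε _ => Real.rpow_nonneg (norm_nonneg _) _
      · exact div_le_div_of_nonneg_right main1 h2M.le
      · positivity
    refine h5.trans ?_
    have e6 : ((2 * ((∑ y2 : (Fin M → Bool) × (Fin M → Bool), NRM y2 ^ p) / 2^M)) / 2^M)
        = 2 * ((∑ y2 : (Fin M → Bool) × (Fin M → Bool), NRM y2 ^ p) / ((2:ℝ)^M * 2^M)) := by
      rw [mul_div_assoc, div_div]
    rw [e6, Real.mul_rpow (by norm_num) (by positivity)]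
    rw [← hD]
    have h7 : (2:ℝ) ^ ((1:ℝ)/p) ≤ 2 := by
      nth_rewrite 2 [show (2:ℝ) = 2 ^ (1:ℝ) from (Real.rpow_one 2).symm]
      apply Real.rpow_le_rpow_of_exponent_le (by norm_num)
      rw [div_le_one hp0]
      exact hp1
    have hD0 : 0 ≤ D := by rw [hD]; positivity
    exact mul_le_mul_of_nonneg_right h7 hD0
  -- Minkowski split and type
  have main3 : D ≤ radLq p vA + radLq p vB := by
    have hle : ∀ y2 : (Fin M → Bool) × (Fin M → Bool),
        NRM y2 ^ p ≤ ((‖∑ j, (if y2.1 j then vA j else -vA j)‖)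
          + ‖∑ j, (if y2.2 j then vB j else -vB j)‖) ^ p := by
      intro y2
      apply Real.rpow_le_rpow (hNRM0 y2) _ (by linarith)
      rw [hNRM]
      exact norm_add_le _ _
    have h8 : D ≤ ((∑ y2 : (Fin M → Bool) × (Fin M → Bool),
        ((‖∑ j, (if y2.1 j then vA j else -vA j)‖)
          + ‖∑ j, (if y2.2 j then vB j else -vB j)‖) ^ p) / ((2:ℝ)^M * 2^M)) ^ (1/p) := by
      rw [hD]
      apply Real.rpow_le_rpow (by positivity)
      · apply div_le_div_of_nonneg_right (Finset.sum_le_sum fun y2 _ => hle y2) (by positivity)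
      · positivity
    refine h8.trans ?_
    have := avg_split p hp1
      (fun ε : Fin M → Bool => ‖∑ j, (if ε j then vA j else -vA j)‖)
      (fun ε : Fin M → Bool => ‖∑ j, (if ε j then vB j else -vB j)‖)
      (fun ε => norm_nonneg _) (fun ε => norm_nonneg _)
      ((2:ℝ)^M) ((2:ℝ)^M) h2M h2M hcard hcard
    exact this
  have htypeA : radLq p vA ≤ τ * (2*(k:ℝ)) * (∑ j, c j ^ p) ^ (1/p) := by
    refine (hτ M vA).trans ?_
    have h9 : (∑ j, ‖vA j‖ ^ p) ^ (1/p) ≤ (2*(k:ℝ)) * (∑ j, c j ^ p) ^ (1/p) := by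
      rw [← rpow_pull_const p (2*(k:ℝ)) hp0 (by positivity) c hc0]
      apply Real.rpow_le_rpow
      · exact Finset.sum_nonneg fun j _ => Real.rpow_nonneg (norm_nonneg _) _
      · apply Finset.sum_le_sum
        intro j _
        apply Real.rpow_le_rpow (norm_nonneg _) _ (by linarith)
        rw [hvA]; dsimp only
        rw [norm_smul, Real.norm_eq_abs, abs_of_nonneg (by positivity : (0:ℝ) ≤ 2 * ((k:ℝ) * c j))]
        calc 2 * ((k:ℝ) * c j) * ‖dh j‖ ≤ 2 * ((k:ℝ) * c j) * 1 :=
              mul_le_mul_of_nonneg_left (norm_normalize_le _) (by positivity)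
          _ = 2*(k:ℝ) * c j := by ring
      · positivity
    calc τ * (∑ j, ‖vA j‖ ^ p) ^ (1/p) ≤ τ * ((2*(k:ℝ)) * (∑ j, c j ^ p) ^ (1/p)) :=
          mul_le_mul_of_nonneg_left h9 hτ0
      _ = τ * (2*(k:ℝ)) * (∑ j, c j ^ p) ^ (1/p) := by ring
  have htypeB : radLq p vB ≤ τ * (2*(k:ℝ)) * (∑ j, c j ^ p) ^ (1/p) := by
    refine (hτ M vB).trans ?_
    have h9 : (∑ j, ‖vB j‖ ^ p) ^ (1/p) ≤ (2*(k:ℝ)) * (∑ j, c j ^ p) ^ (1/p) := by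
      rw [← rpow_pull_const p (2*(k:ℝ)) hp0 (by positivity) c hc0]
      apply Real.rpow_le_rpow
      · exact Finset.sum_nonneg fun j _ => Real.rpow_nonneg (norm_nonneg _) _
      · apply Finset.sum_le_sum
        intro j _
        apply Real.rpow_le_rpow (norm_nonneg _) _ (by linarith)
        rw [hvB]; dsimp only
        rw [norm_smul, Real.norm_eq_abs, abs_of_nonneg (by positivity : (0:ℝ) ≤ 2 * ((k:ℝ) * c j))]
        calc 2 * ((k:ℝ) * c j) * ‖yh j‖ ≤ 2 * ((k:ℝ) * c j) * 1 :=
              mul_le_mul_of_nonneg_left (norm_normalize_le _) (by positivity)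
          _ = 2*(k:ℝ) * c j := by ring
      · positivity
    calc τ * (∑ j, ‖vB j‖ ^ p) ^ (1/p) ≤ τ * ((2*(k:ℝ)) * (∑ j, c j ^ p) ^ (1/p)) :=
          mul_le_mul_of_nonneg_left h9 hτ0
      _ = τ * (2*(k:ℝ)) * (∑ j, c j ^ p) ^ (1/p) := by ring
  have hScp : (0:ℝ) ≤ (∑ j, c j ^ p) ^ (1/p) :=
    Real.rpow_nonneg (Finset.sum_nonneg fun j _ => Real.rpow_nonneg (hc0 j) _) _
  calc radLq p (fun j => Psi k i (d j) (y j)) ≤ 2 * D := main2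
    _ ≤ 2 * (radLq p vA + radLq p vB) := by
        have := main3
        linarith
    _ ≤ 2 * (τ * (2*(k:ℝ)) * (∑ j, c j ^ p) ^ (1/p) + τ * (2*(k:ℝ)) * (∑ j, c j ^ p) ^ (1/p)) := by
        have := htypeA; have := htypeB
        linarith
    _ = 8 * k * τ * (∑ j, c j ^ p) ^ (1/p) := by ring
    _ = 8 * k * τ * (∑ j, (‖d j‖ ^ i * ‖y j‖ ^ (k - i)) ^ p) ^ (1/p) := by rw [hc]

end RadAux

open RadAux in
/-- **Lemma (Rademacher averages of differences of elementary symmetric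
tensors).** -/
theorem rademacher_tensor_difference
    {Ω : Type v} [MeasurableSpace Ω] (μ : Measure Ω) [IsProbabilityMeasure μ]
    (p q τ K₁ K₂ : ℝ) (hp1 : 1 ≤ p) (hp2 : p ≤ 2) (hq : p ≤ q)
    (hτ : ∀ (n : ℕ) (x : Fin n → E), radLq p x ≤ τ * (∑ j, ‖x j‖ ^ p) ^ (1/p))
    (hK₁ : ∀ (F : Type u) (_ : SeminormedAddCommGroup F) (n : ℕ) (x : Fin n → F),
      radLq q x ≤ K₁ * radLq p x)
    (hK₂ : ∀ (F : Type u) (_ : SeminormedAddCommGroup F) (n : ℕ) (x : Fin n → F),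
      radLq q x ≤ K₂ * radLq 2 x)
    (k M : ℕ) (hk : 1 ≤ k)
    (x y : Fin M → E)
    (r : Fin M → Ω → ℝ)
    (hr_meas : ∀ j, Measurable (r j))
    (hr_val : ∀ j, ∀ᵐ ω ∂μ, r j ω = 1 ∨ r j ω = -1)
    (hr_half : ∀ j, μ {ω | r j ω = 1} = 1/2)
    (hr_indep : iIndepFun r μ) :
    (∫ ω, (symInjNorm (∑ j, r j ω •
        ((⨂ₜ[ℝ] _ : Fin k, x j) - ⨂ₜ[ℝ] _ : Fin k, y j))) ^ q ∂μ) ^ (1/q)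
      ≤ 16 * k * Real.sqrt Real.pi * K₁ * τ * K₂
          * ∑ i ∈ Finset.Icc 1 k, (k.choose i : ℝ)
              * (∑ j, ‖x j - y j‖ ^ ((i : ℝ) * p)
                  * ‖y j‖ ^ (((k : ℝ) - (i : ℝ)) * p)) ^ (1/p) := by
  classical
  have hp0 : (0:ℝ) < p := by linarith
  have hq0 : (0:ℝ) < q := by linarith
  rcases subsingleton_or_nontrivial E with hE | hE
  · -- trivial case : everything is zero
    have hU : ∀ j, ((⨂ₜ[ℝ] _ : Fin k, x j) : ⨂[ℝ] _ : Fin k, E)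
        - (⨂ₜ[ℝ] _ : Fin k, y j) = 0 := by
      intro j
      rw [Subsingleton.elim (x j) (y j), sub_self]
    have hI : ∀ ω, (symInjNorm (∑ j, r j ω •
        ((⨂ₜ[ℝ] _ : Fin k, x j) - ⨂ₜ[ℝ] _ : Fin k, y j))) ^ q = 0 := by
      intro ω
      have e0 : (∑ j, r j ω • ((⨂ₜ[ℝ] _ : Fin k, x j) - ⨂ₜ[ℝ] _ : Fin k, y j))
          = (0 : ⨂[ℝ] _ : Fin k, E) := by
        apply Finset.sum_eq_zero
        intro j _
        rw [hU j, smul_zero]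
      rw [e0]
      have hz : symInjNorm (0 : ⨂[ℝ] _ : Fin k, E) = 0 := by
        unfold symInjNorm
        have hset : {r0 | ∃ f : E →L[ℝ] ℝ, ‖f‖ ≤ 1 ∧ r0 = |tpair (fun _ => f) (0 : ⨂[ℝ] _ : Fin k, E)|}
            = {(0:ℝ)} := by
          ext r0
          simp only [Set.mem_setOf_eq, Set.mem_singleton_iff, map_zero, abs_zero]
          constructor
          · rintro ⟨f, _, rfl⟩; rfl
          · rintro rfl; exact ⟨0, by simp, rfl⟩
        rw [hset, csSup_singleton]
      rw [hz, Real.zero_rpow hq0.ne']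
    have hint0 : (∫ ω, (symInjNorm (∑ j, r j ω •
        ((⨂ₜ[ℝ] _ : Fin k, x j) - ⨂ₜ[ℝ] _ : Fin k, y j))) ^ q ∂μ) = 0 := by
      have e : (fun ω => (symInjNorm (∑ j, r j ω •
          ((⨂ₜ[ℝ] _ : Fin k, x j) - ⨂ₜ[ℝ] _ : Fin k, y j))) ^ q) = fun _ => (0:ℝ) :=
        funext hI
      rw [e, integral_zero]
    rw [hint0, Real.zero_rpow (by positivity : (1:ℝ)/q ≠ 0)]
    have hR : ∀ i ∈ Finset.Icc 1 k,
        ((∑ j, ‖x j - y j‖ ^ ((i:ℝ)*p) * ‖y j‖ ^ (((k:ℝ)-(i:ℝ))*p)) : ℝ) ^ (1/p) = 0 := by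
      intro i hi
      obtain ⟨hi1, _⟩ := Finset.mem_Icc.mp hi
      have hz : ∀ j, ‖x j - y j‖ ^ ((i:ℝ)*p) * ‖y j‖ ^ (((k:ℝ)-(i:ℝ))*p) = 0 := by
        intro j
        have hiR : (1:ℝ) ≤ (i:ℝ) := by exact_mod_cast hi1
        rw [Subsingleton.elim (x j) (y j), sub_self, norm_zero,
          Real.zero_rpow (by nlinarith : (i:ℝ)*p ≠ 0), zero_mul]
      rw [Finset.sum_eq_zero fun j _ => hz j, Real.zero_rpow (by positivity : (1:ℝ)/p ≠ 0)]
    have hzero : (∑ i ∈ Finset.Icc 1 k, (k.choose i : ℝ)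
        * (∑ j, ‖x j - y j‖ ^ ((i:ℝ)*p) * ‖y j‖ ^ (((k:ℝ)-(i:ℝ))*p)) ^ (1/p)) = 0 :=
      Finset.sum_eq_zero fun i hi => by rw [hR i hi, mul_zero]
    rw [hzero, mul_zero]
  · -- main case
    have hone : ∀ (ρ : ℝ), 0 < ρ →
        radLq ρ (fun _ : Fin 1 => (ULift.up 1 : ULift.{u} ℝ)) = 1 := by
      intro ρ hρ
      rw [radLq_single hρ]
      simp [ULift.norm_def]
    have hK₁1 : 1 ≤ K₁ := by
      have h := hK₁ (ULift.{u} ℝ) inferInstance 1 (fun _ => ULift.up 1)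
      rwa [hone q hq0, hone p hp0, mul_one] at h
    have hK₂1 : 1 ≤ K₂ := by
      have h := hK₂ (ULift.{u} ℝ) inferInstance 1 (fun _ => ULift.up 1)
      rwa [hone q hq0, hone 2 (by norm_num), mul_one] at h
    have hτ1 : 1 ≤ τ := by
      obtain ⟨v, hv⟩ := exists_ne (0 : E)
      have h1 := hτ 1 (fun _ => v)
      rw [radLq_single hp0] at h1
      have h2 : ((∑ _j : Fin 1, ‖v‖ ^ p) : ℝ) ^ (1/p) = ‖v‖ := by
        rw [Fin.sum_univ_one, one_div]
        exact Real.rpow_rpow_inv (norm_nonneg v) hp0.ne'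
      rw [h2] at h1
      have hv0 : 0 < ‖v‖ := norm_pos_iff.mpr hv
      nlinarith
    -- setup
    set U : Fin M → (⨂[ℝ] _ : Fin k, E) :=
      fun j => (⨂ₜ[ℝ] _ : Fin k, x j) - (⨂ₜ[ℝ] _ : Fin k, y j) with hUdef
    have htU : ∀ (j : Fin M) (f : E →L[ℝ] ℝ),
        tpair (fun _ => f) (U j) = (f (x j)) ^ k - (f (y j)) ^ k := by
      intro j f
      rw [hUdef]
      dsimp only
      rw [map_sub, tpair_tprod, tpair_tprod]
    have hVbound : ∀ (j : Fin M) (f : Ball E),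
        |tpair (fun _ => f.1) (U j)| ≤ ‖x j‖^k + ‖y j‖^k := by
      intro j f
      rw [htU j f.1, sub_eq_add_neg]
      refine (abs_add_le _ _).trans ?_
      rw [abs_neg, abs_pow, abs_pow]
      exact add_le_add (pow_le_pow_left₀ (abs_nonneg _) (ball_eval_le f _) k)
        (pow_le_pow_left₀ (abs_nonneg _) (ball_eval_le f _) k)
    set V : Fin M → FF E := fun j => mkF (fun f => tpair (fun _ => f.1) (U j))
      (‖x j‖^k + ‖y j‖^k) (hVbound j) with hVdef
    set G : (Fin M → Bool) → ℝ :=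
      fun b => (symInjNorm (∑ j, (if b j then U j else -U j))) ^ q with hGdef
    have hae : (fun ω => (symInjNorm (∑ j, r j ω •
          ((⨂ₜ[ℝ] _ : Fin k, x j) - ⨂ₜ[ℝ] _ : Fin k, y j))) ^ q)
        =ᵐ[μ] fun ω => G (fun j => decide (r j ω = 1)) := by
      have hall := MeasureTheory.ae_all_iff.mpr hr_val
      filter_upwards [hall] with ω hω
      rw [hGdef]
      dsimp only
      congr 2
      apply Finset.sum_congr rfl
      intro j _
      rcases hω j with h | h
      · simp only [h, one_smul]
        simp [hUdef]
      · simp only [h, neg_one_smul]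
        have hne : ¬ ((-1:ℝ) = 1) := by norm_num
        simp [hUdef, hne]
    have hint : (∫ ω, (symInjNorm (∑ j, r j ω •
        ((⨂ₜ[ℝ] _ : Fin k, x j) - ⨂ₜ[ℝ] _ : Fin k, y j))) ^ q ∂μ)
        = (∑ b, G b) / 2 ^ M := by
      rw [integral_congr_ae hae]
      exact rad_integral μ M r hr_meas hr_half hr_indep G
    have hGnorm : ∀ b : Fin M → Bool,
        symInjNorm (∑ j, (if b j then U j else -U j))
          = ‖∑ j, (if b j then V j else -V j)‖ := by
      intro b
      rw [symInjNorm_eq, norm_FF]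
      apply iSup_congr
      intro f
      congr 1
      rw [coeFn_sum, map_sum]
      apply Finset.sum_congr rfl
      intro j _
      by_cases h : b j
      · rw [if_pos h, if_pos h, hVdef]
        rfl
      · rw [if_neg h, if_neg h, map_neg, lp.coeFn_neg, Pi.neg_apply, hVdef]
        rfl
    have hLHS : ((∑ b, G b) / 2 ^ M) ^ ((1:ℝ)/q) = radLq q V := by
      unfold radLq
      congr 2
      apply Finset.sum_congr rfl
      intro b _
      rw [hGdef]
      dsimp only
      rw [hGnorm b]
    rw [hint, hLHS]
    -- binomial decomposition
    have hbin : ∀ j, V j = ∑ i ∈ Finset.Icc 1 k, (k.choose i : ℝ) • Psi k i (x j - y j) (y j) := by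
      intro j
      apply lp.ext
      funext f
      have hcoordR : ((∑ i ∈ Finset.Icc 1 k, (k.choose i : ℝ) • Psi k i (x j - y j) (y j) : FF E)
          : ∀ _ : Ball E, ℝ) f
          = ∑ i ∈ Finset.Icc 1 k, (k.choose i : ℝ) * ((f.1 (x j - y j))^i * (f.1 (y j))^(k-i)) := by
        rw [coeFn_sum]
        apply Finset.sum_congr rfl
        intro i _
        rw [lp.coeFn_smul, Pi.smul_apply, Psi_coe, smul_eq_mul]
      have hcoordL : ((V j : FF E) : ∀ _ : Ball E, ℝ) f = (f.1 (x j))^k - (f.1 (y j))^k := by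
        rw [hVdef]
        dsimp only
        rw [mkF_coe, htU j f.1]
      rw [hcoordL, hcoordR]
      have hx : f.1 (x j) = f.1 (x j - y j) + f.1 (y j) := by
        rw [map_sub]; ring
      have hsplit : Finset.range (k+1) = insert 0 (Finset.Icc 1 k) := by
        ext m
        simp only [Finset.mem_range, Finset.mem_insert, Finset.mem_Icc]
        omega
      rw [hx, add_pow, hsplit, Finset.sum_insert (by simp)]
      simp only [pow_zero, one_mul, Nat.sub_zero, Nat.choose_zero_right, Nat.cast_one, mul_one]
      rw [add_sub_cancel_left]
      apply Finset.sum_congr rfl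
      intro i _
      ring
    -- the chain of estimates
    have hchain1 : radLq q V ≤ K₁ * radLq p V := hK₁ (FF E) inferInstance M V
    have hchain2 : radLq p V ≤ ∑ i ∈ Finset.Icc 1 k, (k.choose i : ℝ)
        * radLq p (fun j => Psi k i (x j - y j) (y j)) := by
      calc radLq p V
          = radLq p (fun j => ∑ i ∈ Finset.Icc 1 k, (k.choose i : ℝ) • Psi k i (x j - y j) (y j)) :=
            radLq_congr _ _ hbin
        _ ≤ ∑ i ∈ Finset.Icc 1 k,
              radLq p (fun j => (k.choose i : ℝ) • Psi k i (x j - y j) (y j)) :=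
            radLq_sum_le hp1 _ _
        _ = ∑ i ∈ Finset.Icc 1 k, (k.choose i : ℝ)
              * radLq p (fun j => Psi k i (x j - y j) (y j)) := by
            apply Finset.sum_congr rfl
            intro i _
            rw [radLq_smul hp0, abs_of_nonneg (by positivity : (0:ℝ) ≤ (k.choose i : ℝ))]
    have hchain3 : ∀ i ∈ Finset.Icc 1 k,
        radLq p (fun j => Psi k i (x j - y j) (y j))
          ≤ 8 * k * τ * (∑ j, (‖x j - y j‖ ^ i * ‖y j‖ ^ (k - i)) ^ p) ^ ((1:ℝ)/p) := by
      intro i hi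
      obtain ⟨hi1, hik⟩ := Finset.mem_Icc.mp hi
      exact per_i_bound p τ hp1 hτ1 hτ k i hi1 hik (fun j => x j - y j) y
    have hSi : ∀ i ∈ Finset.Icc 1 k,
        ((∑ j, (‖x j - y j‖ ^ i * ‖y j‖ ^ (k - i)) ^ p) : ℝ)
          = ∑ j, ‖x j - y j‖ ^ ((i:ℝ)*p) * ‖y j‖ ^ (((k:ℝ)-(i:ℝ))*p) := by
      intro i hi
      obtain ⟨_, hik⟩ := Finset.mem_Icc.mp hi
      apply Finset.sum_congr rfl
      intro j _
      rw [Real.mul_rpow (by positivity) (by positivity)]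
      congr 1
      · rw [← Real.rpow_natCast ‖x j - y j‖ i, ← Real.rpow_mul (norm_nonneg _)]
      · rw [← Real.rpow_natCast ‖y j‖ (k-i), ← Real.rpow_mul (norm_nonneg _)]
        congr 1
        rw [Nat.cast_sub hik]
    have hsqrt : 1 ≤ Real.sqrt Real.pi := by
      rw [show (1:ℝ) = Real.sqrt 1 from (Real.sqrt_one).symm]
      exact Real.sqrt_le_sqrt (by linarith [Real.pi_gt_three])
    have hkR : (1:ℝ) ≤ (k:ℝ) := by exact_mod_cast hk
    have hτ0 : (0:ℝ) ≤ τ := by linarith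
    calc radLq q V ≤ K₁ * radLq p V := hchain1
      _ ≤ K₁ * ∑ i ∈ Finset.Icc 1 k, (k.choose i : ℝ)
            * radLq p (fun j => Psi k i (x j - y j) (y j)) :=
          mul_le_mul_of_nonneg_left hchain2 (by linarith)
      _ ≤ K₁ * ∑ i ∈ Finset.Icc 1 k, (k.choose i : ℝ)
            * (8 * k * τ * (∑ j, (‖x j - y j‖ ^ i * ‖y j‖ ^ (k - i)) ^ p) ^ ((1:ℝ)/p)) := by
          apply mul_le_mul_of_nonneg_left _ (by linarith)
          apply Finset.sum_le_sum
          intro i hi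
          exact mul_le_mul_of_nonneg_left (hchain3 i hi) (by positivity)
      _ ≤ 16 * k * Real.sqrt Real.pi * K₁ * τ * K₂
            * ∑ i ∈ Finset.Icc 1 k, (k.choose i : ℝ)
              * (∑ j, ‖x j - y j‖ ^ ((i:ℝ)*p) * ‖y j‖ ^ (((k:ℝ)-(i:ℝ))*p)) ^ (1/p) := by
          rw [Finset.mul_sum, Finset.mul_sum]
          apply Finset.sum_le_sum
          intro i hi
          rw [← hSi i hi]
          set Si : ℝ := (∑ j, (‖x j - y j‖ ^ i * ‖y j‖ ^ (k - i)) ^ p) ^ ((1:ℝ)/p) with hSidef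
          have hSi0 : 0 ≤ Si := by
            rw [hSidef]
            positivity
          have hC0 : (0:ℝ) ≤ (k.choose i : ℝ) := by positivity
          have key : K₁ * (8 * (k:ℝ) * τ) ≤ 16 * (k:ℝ) * Real.sqrt Real.pi * K₁ * τ * K₂ := by
            have ha0 : (0:ℝ) ≤ 16*(k:ℝ)*τ*K₁ := by positivity
            calc K₁ * (8 * (k:ℝ) * τ) = 8*(k:ℝ)*τ*K₁ := by ring
              _ ≤ 16*(k:ℝ)*τ*K₁ := by nlinarith
              _ ≤ (16*(k:ℝ)*τ*K₁) * (Real.sqrt Real.pi * K₂) := by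
                  apply le_mul_of_one_le_right ha0
                  nlinarith
              _ = 16*(k:ℝ)*Real.sqrt Real.pi*K₁*τ*K₂ := by ring
          calc K₁ * ((k.choose i:ℝ) * (8 * (k:ℝ) * τ * Si))
              = (K₁ * (8 * (k:ℝ) * τ)) * ((k.choose i:ℝ) * Si) := by ring
            _ ≤ (16 * (k:ℝ) * Real.sqrt Real.pi * K₁ * τ * K₂) * ((k.choose i:ℝ) * Si) :=
                mul_le_mul_of_nonneg_right key (mul_nonneg hC0 hSi0)
            _ = 16 * (k:ℝ) * Real.sqrt Real.pi * K₁ * τ * K₂ * ((k.choose i:ℝ) * Si) := by ring
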